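/- arXiv:1103.2673 — 6 statements merged into one kernel-verified Lean document; each statement's English description precedes it below -/
import Mathlib

section
/- Let K be a field equipped with a valuation v : K → ℝ ∪ {∞} (so v(ab) = v(a) + v(b), v(a+b) ≥ min(v(a), v(b)), and v(a) = ∞ iff a = 0). Let f ∈ K[x₁,…,xₙ] be a nonzero polynomial and p ∈ (K*)ⁿ a point with f(p) = 0. Then, setting w = (v(p₁),…,v(pₙ)) ∈ ℝⁿ, the minimum min_{a ∈ supp(f)} (v(c_a) + ⟨a, w⟩) is attained by at least two distinct exponents a ∈ supp(f), where c_a denotes the coefficient of x^a in f; i.e., w lies in the corner locus T(trop(f)). -/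
open MvPolynomial

section Aux

variable {K : Type*} [Field K] (v : K → WithTop ℝ)
  (hv_mul : ∀ a b : K, v (a * b) = v a + v b)
  (hv_top : ∀ a : K, v a = ⊤ ↔ a = 0)

include hv_mul hv_top in
lemma aux_v_one : v 1 = 0 := by
  have h : v 1 = v 1 + v 1 := by rw [← hv_mul]; norm_num
  have hne : v 1 ≠ ⊤ := by simp [hv_top]
  lift v 1 to ℝ using hne with x hx
  rw [← WithTop.coe_add, WithTop.coe_eq_coe] at h
  norm_cast
  linarith

include hv_mul hv_top in
lemma aux_v_neg (a : K) : v (-a) = v a := by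
  have h1 : v (-1) = 0 := by
    have h : v (-1) + v (-1) = 0 := by
      rw [← hv_mul]; norm_num; exact aux_v_one v hv_mul hv_top
    have hne : v (-1) ≠ ⊤ := by simp [hv_top]
    lift v (-1) to ℝ using hne with x hx
    rw [← WithTop.coe_add] at h
    norm_cast at h ⊢
    linarith
  calc v (-a) = v ((-1) * a) := by ring_nf
    _ = v (-1) + v a := hv_mul _ _
    _ = v a := by rw [h1, zero_add]

include hv_mul hv_top in
lemma aux_v_pow (a : K) (k : ℕ) : v (a ^ k) = k • v a := by
  induction k with
  | zero => simpa using aux_v_one v hv_mul hv_top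
  | succ k ih => rw [pow_succ, hv_mul, ih, succ_nsmul]

include hv_mul hv_top in
lemma aux_v_prod {ι : Type*} (s : Finset ι) (g : ι → K) :
    v (∏ i ∈ s, g i) = ∑ i ∈ s, v (g i) := by
  classical
  induction s using Finset.induction with
  | empty => simpa using aux_v_one v hv_mul hv_top
  | insert a s hx ih =>
    rw [Finset.prod_insert hx, Finset.sum_insert hx, hv_mul, ih]

variable (hv_add : ∀ a b : K, min (v a) (v b) ≤ v (a + b))

include hv_top hv_add in
lemma aux_v_sum_lt {ι : Type*} (s : Finset ι) (g : ι → K) (c : WithTop ℝ)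
    (hc : c < ⊤) (h : ∀ i ∈ s, c < v (g i)) : c < v (∑ i ∈ s, g i) := by
  classical
  induction s using Finset.induction with
  | empty =>
    simpa [(hv_top (0 : K)).mpr rfl] using hc
  | @insert a s hx ih =>
    rw [Finset.sum_insert hx]
    refine lt_of_lt_of_le ?_ (hv_add _ _)
    exact lt_min (h a (Finset.mem_insert_self a s))
      (ih fun i hi => h i (Finset.mem_insert_of_mem hi))

include hv_add hv_mul hv_top in
lemma aux_v_add_eq (a b : K) (h : v a < v b) : v (a + b) = v a := by
  have h1 : v a ≤ v (a + b) := by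
    have := hv_add a b
    rwa [min_eq_left h.le] at this
  refine le_antisymm ?_ h1
  by_contra hcon
  push_neg at hcon
  have hmin := hv_add (a + b) (-b)
  rw [aux_v_neg v hv_mul hv_top, add_neg_cancel_right] at hmin
  exact absurd hmin (not_le.mpr (lt_min hcon h))

end Aux

/-- The tropical value `v(c_a) + ⟨a, w⟩` of the term of `f` with exponent `a`,
at the weight vector `w`, for a valuation `v` with values in `ℝ ∪ {∞}`. -/
noncomputable def tropTerm {K : Type*} [Field K] {n : ℕ} (v : K → WithTop ℝ)
    (f : MvPolynomial (Fin n) K) (w : Fin n → ℝ) (a : Fin n →₀ ℕ) : WithTop ℝ :=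
  v (coeff a f) + ((∑ i, (a i : ℝ) * w i : ℝ) : WithTop ℝ)

/-- If `f(p) = 0` for a point `p` of the torus, then the valuation vector of `p`
lies in the corner locus of the tropicalization of `f`: the minimum of
`v(c_a) + ⟨a, w⟩` over the support of `f` is attained at least twice. -/
theorem amoeba_subset_corner_locus {K : Type*} [Field K] {n : ℕ}
    (v : K → WithTop ℝ)
    (hv_mul : ∀ a b : K, v (a * b) = v a + v b)
    (hv_add : ∀ a b : K, min (v a) (v b) ≤ v (a + b))
    (hv_top : ∀ a : K, v a = ⊤ ↔ a = 0)
    (f : MvPolynomial (Fin n) K) (hf : f ≠ 0)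
    (p : Fin n → K) (hp : ∀ i, p i ≠ 0) (hfp : eval p f = 0)
    (w : Fin n → ℝ) (hw : ∀ i, (w i : WithTop ℝ) = v (p i)) :
    ∃ a ∈ f.support, ∃ b ∈ f.support, a ≠ b ∧
      tropTerm v f w a = tropTerm v f w b ∧
      ∀ e ∈ f.support, tropTerm v f w a ≤ tropTerm v f w e := by
  -- the term of f at exponent a, evaluated at p
  set T : (Fin n →₀ ℕ) → K := fun a => coeff a f * ∏ i, p i ^ a i with hT
  have hvT : ∀ a : Fin n →₀ ℕ, v (T a) = tropTerm v f w a := by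
    intro a
    rw [hT]
    simp only
    rw [hv_mul, aux_v_prod v hv_mul hv_top, tropTerm]
    congr 1
    have : ∀ i : Fin n, v (p i ^ a i) = (((a i : ℝ) * w i : ℝ) : WithTop ℝ) := by
      intro i
      rw [aux_v_pow v hv_mul hv_top, ← hw i, ← WithTop.coe_nsmul]
      norm_cast
      simp [nsmul_eq_mul]
    rw [Finset.sum_congr rfl fun i _ => this i]
    push_cast
    rfl
  have hsum : ∑ a ∈ f.support, T a = 0 := by
    rw [← MvPolynomial.eval_eq' p f]; exact hfp
  have hne : f.support.Nonempty := by
    rw [Finset.nonempty_iff_ne_empty, Ne, MvPolynomial.support_eq_empty]; exact hf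
  obtain ⟨a, ha, hmin⟩ := Finset.exists_min_image f.support (tropTerm v f w) hne
  have hta : tropTerm v f w a ≠ ⊤ := by
    rw [← hvT, Ne, hv_top]
    intro h0
    rcases mul_eq_zero.mp h0 with h | h
    · exact (MvPolynomial.mem_support_iff.mp ha) h
    · obtain ⟨i, -, hi⟩ := Finset.prod_eq_zero_iff.mp h
      exact hp i (pow_eq_zero_iff' .. |>.mp hi).1
  refine ⟨a, ha, ?_⟩
  by_contra hcon
  push_neg at hcon
  have hstrict : ∀ b ∈ f.support.erase a, tropTerm v f w a < tropTerm v f w b := by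
    intro b hb
    obtain ⟨hba, hbs⟩ := Finset.mem_erase.mp hb
    rcases lt_or_eq_of_le (hmin b hbs) with h | h
    · exact h
    · obtain ⟨e, he, hlt⟩ := hcon b hbs (Ne.symm hba) h
      exact absurd (hmin e he) (not_le.mpr hlt)
  have hrest : tropTerm v f w a < v (∑ b ∈ f.support.erase a, T b) := by
    refine aux_v_sum_lt v hv_top hv_add _ _ _ (lt_top_iff_ne_top.mpr hta) ?_
    intro b hb
    rw [hvT]
    exact hstrict b hb
  have hsplit : T a + ∑ b ∈ f.support.erase a, T b = 0 := by
    rw [Finset.add_sum_erase _ _ ha]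
    exact hsum
  have : v (T a + ∑ b ∈ f.support.erase a, T b) = v (T a) := by
    refine aux_v_add_eq v hv_mul hv_top hv_add _ _ ?_
    rw [hvT]; exact hrest
  rw [hsplit, (hv_top 0).mpr rfl, hvT] at this
  exact hta this.symm
end

section
/- Let S = ℂ[x₁,…,x_N], let J₁,…,J_c be pairwise disjoint nonempty subsets of {1,…,N}, let m_j = ∏_{i ∈ J_j} x_i and I₀ = ⟨m₁,…,m_c⟩ ⊆ S. Let g₁,…,g_c ∈ S be polynomials none of whose monomials lies in I₀, and assume that for every a ∈ ℂ the polynomials m₁ + a·g₁, …, m_c + a·g_c form a regular sequence in S. Then the quotient ring ℂ[t][x₁,…,x_N]/⟨m_j + t·g_j : j = 1,…,c⟩ is flat as a ℂ[t]-module, and the ideal ⟨m_j + t·g_j : j = 1,…,c⟩ + ⟨t⟩ equals I₀·ℂ[t][x₁,…,x_N] + ⟨t⟩; in particular the fiber of the family at t = 0 is S/I₀. -/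
open MvPolynomial

-- Flatness of a torsion-free module over a PID.
lemma flat_of_tf {R : Type*} [CommRing R] [IsPrincipalIdealRing R]
    {M : Type*} [AddCommGroup M] [Module R M]
    (htf : ∀ (p : R) (x : M), p ≠ 0 → p • x = 0 → x = 0) : Module.Flat R M := by
  rw [Module.Flat.iff_lift_lsmul_comp_subtype_injective]
  intro I _
  obtain ⟨p, hp⟩ := (IsPrincipalIdealRing.principal I).principal
  have hpI : p ∈ I := by rw [hp]; exact Ideal.subset_span rfl
  set φ := TensorProduct.lift ((LinearMap.lsmul R M).comp I.subtype) with hφ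
  set ψ : M →ₗ[R] TensorProduct R I M := TensorProduct.mk R I M ⟨p, hpI⟩ with hψ
  have hsurj : Function.Surjective ψ := by
    rw [← LinearMap.range_eq_top]
    rw [eq_top_iff]
    intro z _
    induction z using TensorProduct.induction_on with
    | zero => exact zero_mem _
    | tmul j x =>
        obtain ⟨j, hj⟩ := j
        have hj' : j ∈ Submodule.span R {p} := hp ▸ hj
        obtain ⟨r, hr⟩ := Ideal.mem_span_singleton'.mp hj'
        refine ⟨r • x, ?_⟩
        have : (⟨j, hj⟩ : I) = r • ⟨p, hpI⟩ := Subtype.ext (by simp [← hr])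
        rw [hψ]
        simp only [TensorProduct.mk_apply]
        rw [this, TensorProduct.smul_tmul]
    | add a b ha hb =>
        obtain ⟨x, hx⟩ := ha trivial
        obtain ⟨y, hy⟩ := hb trivial
        exact ⟨x + y, by rw [map_add, hx, hy]⟩
  rw [injective_iff_map_eq_zero]
  intro z hz
  obtain ⟨x, rfl⟩ := hsurj z
  have hzval : φ (ψ x) = p • x := by simp [hφ, hψ]
  rw [hzval] at hz
  by_cases hp0 : p = 0
  · subst hp0
    have : (⟨(0:R), hpI⟩ : I) = 0 := rfl
    simp [hψ, this]
  · rw [htf p x hp0 hz, map_zero]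

-- key NZD lemma
lemma key_nzd {R : Type*} [CommRing R] (u : R) (l : List R)
    (hu : ∀ x : R, u * x = 0 → x = 0)
    (hreg : ∀ (l₁ : List R) (f : R) (l₂ : List R), l = l₁ ++ f :: l₂ →
      ∀ Q : R, f * Q ∈ Ideal.span {u} ⊔ Ideal.ofList l₁ →
        Q ∈ Ideal.span {u} ⊔ Ideal.ofList l₁) :
    ∀ P : R, u * P ∈ Ideal.ofList l → P ∈ Ideal.ofList l := by
  induction l using List.reverseRecOn with
  | nil =>
      intro P hP
      rw [Ideal.ofList_nil] at hP ⊢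
      exact (Submodule.mem_bot R).mpr (hu P ((Submodule.mem_bot R).mp hP))
  | append_singleton l' f ih =>
      intro P hP
      rw [Ideal.ofList_append, Ideal.ofList_singleton] at hP ⊢
      obtain ⟨s, hs, z, hz, hPeq⟩ := Submodule.mem_sup.mp hP
      obtain ⟨h, hh⟩ := Ideal.mem_span_singleton'.mp hz
      -- f * h ∈ span{u} ⊔ ofList l'
      have h1 : f * h ∈ Ideal.span {u} ⊔ Ideal.ofList l' := by
        have : f * h = u * P - s := by linear_combination hh + hPeq
        rw [this]
        exact sub_mem (le_sup_left (α := Ideal R)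
          (Ideal.mem_span_singleton'.mpr ⟨P, by ring⟩)) (le_sup_right (α := Ideal R) hs)
      have h2 := hreg l' f [] rfl h h1
      obtain ⟨z', hz', s', hs', hheq⟩ := Submodule.mem_sup.mp h2
      obtain ⟨q, hq⟩ := Ideal.mem_span_singleton'.mp hz'
      have h3 : u * (P - q * f) ∈ Ideal.ofList l' := by
        have : u * (P - q * f) = s + s' * f := by
          linear_combination -hPeq - hh - f * hheq - f * hq
        rw [this]
        exact add_mem hs (Ideal.mul_mem_right f _ hs')
      have h4 : P - q * f ∈ Ideal.ofList l' := by
        refine ih ?_ _ h3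
        intro l₁ f₀ l₂ hdec Q hQ
        exact hreg l₁ f₀ (l₂ ++ [f]) (by rw [hdec]; simp) Q hQ
      have : P = (P - q * f) + q * f := by ring
      rw [this]
      exact Submodule.add_mem _ (le_sup_left (α := Ideal R) h4)
        (le_sup_right (α := Ideal R) (Ideal.mem_span_singleton'.mpr ⟨q, rfl⟩))

lemma transfer_reg {R S : Type*} [CommRing R] [CommRing S] (τ : R →+* S)
    (hs : Function.Surjective τ) (u : R) (hker : RingHom.ker τ = Ideal.span {u})
    (l : List R) (hreg : RingTheory.Sequence.IsWeaklyRegular S (l.map τ)) :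
    ∀ (l₁ : List R) (f : R) (l₂ : List R), l = l₁ ++ f :: l₂ →
      ∀ Q : R, f * Q ∈ Ideal.span {u} ⊔ Ideal.ofList l₁ →
        Q ∈ Ideal.span {u} ⊔ Ideal.ofList l₁ := by
  intro l₁ f l₂ hdec Q hQ
  have hcomap : Ideal.span {u} ⊔ Ideal.ofList l₁
      = Ideal.comap τ (Ideal.ofList (l₁.map τ)) := by
    rw [← Ideal.map_ofList, Ideal.comap_map_of_surjective τ hs, ← RingHom.ker_eq_comap_bot,
      hker, sup_comm]
  set J := Ideal.ofList (l₁.map τ) with hJ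
  have hJtop : (J • ⊤ : Submodule S S) = J := by
    rw [Ideal.smul_top_eq_map, Algebra.algebraMap_self, Ideal.map_id, Submodule.restrictScalars_self]
  have hi : l₁.length < (l.map τ).length := by simp [hdec]
  have hget : (l.map τ)[l₁.length]'hi = τ f := by
    subst hdec
    simp [List.getElem_append_right]
  have htake : (l.map τ).take l₁.length = l₁.map τ := by
    subst hdec
    rw [List.map_append]
    rw [show l₁.length = (l₁.map τ).length by simp]
    exact List.take_left
  have hr := hreg.regular_mod_prev l₁.length hi
  rw [hget, htake, ← hJ] at hr
  rw [hcomap, Ideal.mem_comap] at hQ ⊢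
  rw [map_mul] at hQ
  have h0 : τ f • (Submodule.Quotient.mk (τ Q) : S ⧸ (J • ⊤ : Submodule S S))
      = τ f • (0 : S ⧸ (J • ⊤ : Submodule S S)) := by
    rw [smul_zero, ← Submodule.Quotient.mk_smul, Submodule.Quotient.mk_eq_zero, hJtop,
      smul_eq_mul]
    exact hQ
  have := hr h0
  rw [Submodule.Quotient.mk_eq_zero, hJtop] at this
  exact this
/-- The canonical monomial degeneration of a complete intersection:
given pairwise disjoint nonempty sets `J j` with associated squarefree monomials
`m j = ∏_{i ∈ J j} x i`, the monomial ideal `I₀ = ⟨m₁, …, m_c⟩`, and polynomials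
`g j` none of whose monomials lies in `I₀` such that `m j + a • g j` is a regular
sequence for every `a : ℂ`, the family defined by the ideal
`I = ⟨m j + t · g j⟩ ⊆ ℂ[t][x₁,…,x_N]` is flat over `ℂ[t]` and its fiber at
`t = 0` is defined by `I₀`. -/
theorem canonical_degeneration_flat_with_monomial_special_fiber {N c : ℕ}
    (J : Fin c → Finset (Fin N)) (hJne : ∀ j, (J j).Nonempty)
    (hJdisj : ∀ j k, j ≠ k → Disjoint (J j) (J k))
    (m : Fin c → MvPolynomial (Fin N) ℂ)
    (hm : ∀ j, m j = ∏ i ∈ J j, X i)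
    (I₀ : Ideal (MvPolynomial (Fin N) ℂ))
    (hI₀ : I₀ = Ideal.span (Set.range m))
    (g : Fin c → MvPolynomial (Fin N) ℂ)
    (hg : ∀ j, ∀ a ∈ (g j).support, (monomial a (1 : ℂ)) ∉ I₀)
    (hreg : ∀ a : ℂ, RingTheory.Sequence.IsRegular (MvPolynomial (Fin N) ℂ)
      (List.ofFn fun j => m j + a • g j))
    (I : Ideal (MvPolynomial (Fin N) (Polynomial ℂ)))
    (hI : I = Ideal.span (Set.range fun j =>
      map Polynomial.C (m j) + C Polynomial.X * map Polynomial.C (g j))) :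
    Module.Flat (Polynomial ℂ) (MvPolynomial (Fin N) (Polynomial ℂ) ⧸ I) ∧
      I ⊔ Ideal.span {C Polynomial.X} =
        Ideal.map (map Polynomial.C) I₀ ⊔ Ideal.span {C Polynomial.X} := by
  classical
  set F : Fin c → MvPolynomial (Fin N) (Polynomial ℂ) :=
    fun j => map Polynomial.C (m j) + C Polynomial.X * map Polynomial.C (g j) with hF
  set L : List (MvPolynomial (Fin N) (Polynomial ℂ)) := List.ofFn F with hL
  have hIL : I = Ideal.ofList L := by
    rw [hI]
    unfold Ideal.ofList
    congr 1
    ext x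
    simp [hL, List.mem_ofFn]
  -- Step 1: for every a : ℂ, multiplication by C (X - C a) is injective mod I
  have step1 : ∀ a : ℂ, ∀ P, C (Polynomial.X - Polynomial.C a) * P ∈ I → P ∈ I := by
    intro a
    set τ : MvPolynomial (Fin N) (Polynomial ℂ) →+* MvPolynomial (Fin N) ℂ :=
      MvPolynomial.map (Polynomial.evalRingHom a) with hτ
    have hsurj : Function.Surjective τ :=
      MvPolynomial.map_surjective _ (fun x => ⟨Polynomial.C x, Polynomial.eval_C⟩)
    have hker : RingHom.ker τ = Ideal.span {C (Polynomial.X - Polynomial.C a)} := by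
      rw [hτ, MvPolynomial.ker_map, Polynomial.ker_evalRingHom, Ideal.map_span]
      simp
    have hcomp : (Polynomial.evalRingHom a).comp Polynomial.C = RingHom.id ℂ :=
      RingHom.ext fun x => Polynomial.eval_C
    have hmap : L.map τ = List.ofFn (fun j => m j + a • g j) := by
      rw [hL, List.map_ofFn]
      congr 1
      funext j
      show τ (F j) = _
      rw [hF]
      simp only [map_add, map_mul]
      rw [hτ]
      rw [MvPolynomial.map_map, MvPolynomial.map_map, hcomp, MvPolynomial.map_id,
        MvPolynomial.map_id, MvPolynomial.map_C, MvPolynomial.smul_eq_C_mul]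
      simp [Polynomial.eval_X]
    intro P hP
    rw [hIL] at hP ⊢
    refine key_nzd _ L ?_ ?_ P hP
    · intro x hx
      have hC : (C (Polynomial.X - Polynomial.C a) : MvPolynomial (Fin N) (Polynomial ℂ)) ≠ 0 := by
        intro h
        exact Polynomial.X_sub_C_ne_zero a
          ((map_eq_zero_iff MvPolynomial.C (MvPolynomial.C_injective _ _)).mp h)
      rcases mul_eq_zero.mp hx with h | h
      · exact absurd h hC
      · exact h
    · refine transfer_reg τ hsurj _ hker L ?_
      rw [hmap]
      exact (hreg a).toIsWeaklyRegular
  -- constant case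
  have hconst : ∀ (c₀ : ℂ), c₀ ≠ 0 → ∀ P, C (Polynomial.C c₀) * P ∈ I → P ∈ I := by
    intro c₀ hc P hP
    have : P = C (Polynomial.C c₀⁻¹) * (C (Polynomial.C c₀) * P) := by
      rw [← mul_assoc, ← map_mul, ← map_mul, inv_mul_cancel₀ hc]
      simp
    rw [this]
    exact Ideal.mul_mem_left _ _ hP
  -- Step 2: no torsion by any nonzero polynomial
  have step2 : ∀ (n : ℕ) (p : Polynomial ℂ), p.natDegree ≤ n → p ≠ 0 →
      ∀ P, C p * P ∈ I → P ∈ I := by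
    intro n
    induction n with
    | zero =>
        intro p hdeg hp P hP
        obtain ⟨c₀, rfl⟩ := Polynomial.natDegree_eq_zero.mp (Nat.le_zero.mp hdeg)
        exact hconst c₀ (by simpa using hp) P hP
    | succ n ih =>
        intro p hdeg hp P hP
        by_cases h0 : p.natDegree = 0
        · obtain ⟨c₀, rfl⟩ := Polynomial.natDegree_eq_zero.mp h0
          exact hconst c₀ (by simpa using hp) P hP
        · have hdpos : 0 < p.degree :=
            Polynomial.natDegree_pos_iff_degree_pos.mp (Nat.pos_of_ne_zero h0)
          obtain ⟨a, ha⟩ := Complex.exists_root hdpos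
          obtain ⟨q, hq⟩ := Polynomial.dvd_iff_isRoot.mpr ha
          have hqne : q ≠ 0 := by
            rintro rfl
            rw [mul_zero] at hq
            exact hp hq
          have hdq : q.natDegree ≤ n := by
            rw [hq, Polynomial.natDegree_mul (Polynomial.X_sub_C_ne_zero a) hqne,
              Polynomial.natDegree_X_sub_C] at hdeg
            omega
          refine ih q hdq hqne P ?_
          refine step1 a _ ?_
          have : C (Polynomial.X - Polynomial.C a) * (C q * P) = C p * P := by
            rw [← mul_assoc, ← map_mul, ← hq]
          rw [this]
          exact hP
  constructor
  · -- flatness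
    apply flat_of_tf
    intro p x hp hpx
    obtain ⟨P, rfl⟩ := Ideal.Quotient.mk_surjective x
    have hsmul : p • (Ideal.Quotient.mk I P) = Ideal.Quotient.mk I (C p * P) := by
      have h1 : p • (Ideal.Quotient.mk I P) = Ideal.Quotient.mk I (p • P) := rfl
      rw [h1, MvPolynomial.smul_eq_C_mul]
    rw [hsmul, Ideal.Quotient.eq_zero_iff_mem] at hpx
    rw [Ideal.Quotient.eq_zero_iff_mem]
    exact step2 _ p le_rfl hp P hpx
  · -- fiber at t = 0
    apply le_antisymm
    · apply sup_le
      · rw [hI, Ideal.span_le]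
        rintro x ⟨j, rfl⟩
        refine Submodule.add_mem _ ?_ ?_
        · exact Ideal.mem_sup_left (Ideal.mem_map_of_mem _ (hI₀ ▸ Ideal.subset_span ⟨j, rfl⟩))
        · exact Ideal.mem_sup_right (Ideal.mul_mem_right _ _ (Ideal.subset_span rfl))
      · exact le_sup_right
    · apply sup_le
      · rw [hI₀, Ideal.map_span, Ideal.span_le]
        rintro x ⟨y, ⟨j, rfl⟩, rfl⟩
        have : map Polynomial.C (m j) =
            (map Polynomial.C (m j) + C Polynomial.X * map Polynomial.C (g j))
              - C Polynomial.X * map Polynomial.C (g j) := by ring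
        rw [this]
        refine Submodule.sub_mem _ ?_ ?_
        · exact Ideal.mem_sup_left (hI ▸ Ideal.subset_span ⟨j, rfl⟩)
        · exact Ideal.mem_sup_right (Ideal.mul_mem_right _ _ (Ideal.subset_span rfl))
      · exact le_sup_right
end

section
/- Let S = ℂ[x₁,…,x_N], let J₁,…,J_c be pairwise disjoint nonempty subsets of {1,…,N}, let m_j = x^{b_j} with b_j ∈ ℕ^N the indicator vector of J_j, I₀ = ⟨m₁,…,m_c⟩, and let g₁,…,g_c ∈ S be nonzero polynomials none of whose monomials lies in I₀. Set f_j = m_j + t·g_j ∈ ℂ[t, x₁,…,x_N] and I = ⟨f₁,…,f_c⟩. For (w_t, w) ∈ ℝ × ℝ^N assign to a term c·t^k·x^a the weight k·w_t + ⟨a, w⟩, let in_{(w_t,w)}(h) be the sum of the terms of h of minimal weight, and let in_{(w_t,w)}(I) be the ideal generated by in_{(w_t,w)}(h) for all nonzero h ∈ I. Then: (i) if w_t + ⟨a, w⟩ > ⟨b_j, w⟩ for every j and every a ∈ supp(g_j), then in_{(w_t,w)}(I) = ⟨m₁,…,m_c⟩ (as an ideal of ℂ[t, x₁,…,x_N]);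 (ii) conversely, if in_{(w_t,w)}(I) = ⟨m₁,…,m_c⟩, then w_t + ⟨a, w⟩ ≥ ⟨b_j, w⟩ for every j and every a ∈ supp(g_j). -/
open MvPolynomial
open scoped Classical
open scoped Pointwise

noncomputable section

/-- The weight `k·w_t + ⟨a, w⟩` of an exponent vector `e = (k, a)` in
`ℂ[t, x₁, …, x_N]`, where `t` corresponds to the variable `Sum.inl ()`. -/
def wtExp {N : ℕ} (wt : ℝ) (w : Fin N → ℝ) (e : (Unit ⊕ Fin N) →₀ ℕ) : ℝ :=
  wt * (e (Sum.inl ()) : ℝ) + ∑ i, (e (Sum.inr i) : ℝ) * w i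

/-- The initial form `in_{(w_t,w)}(h)`: the sum of the terms of `h` of minimal
weight. -/
def initialForm {N : ℕ} (wt : ℝ) (w : Fin N → ℝ)
    (h : MvPolynomial (Unit ⊕ Fin N) ℂ) : MvPolynomial (Unit ⊕ Fin N) ℂ :=
  ∑ e ∈ h.support.filter (fun e => ∀ e' ∈ h.support, wtExp wt w e ≤ wtExp wt w e'),
    monomial e (coeff e h)

/-- The initial ideal `in_{(w_t,w)}(I)`, generated by the initial forms of all
nonzero elements of `I`. -/
def initialIdeal {N : ℕ} (wt : ℝ) (w : Fin N → ℝ)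
    (I : Ideal (MvPolynomial (Unit ⊕ Fin N) ℂ)) :
    Ideal (MvPolynomial (Unit ⊕ Fin N) ℂ) :=
  Ideal.span {q | ∃ h ∈ I, h ≠ 0 ∧ q = initialForm wt w h}

section GAuxSec

variable {N : ℕ} (wt : ℝ) (w : Fin N → ℝ)

theorem wtExp_add (d e : (Unit ⊕ Fin N) →₀ ℕ) :
    wtExp wt w (d + e) = wtExp wt w d + wtExp wt w e := by
  unfold wtExp
  simp only [Finsupp.add_apply, Nat.cast_add, add_mul, mul_add, Finset.sum_add_distrib]
  ring

theorem wtExp_tsub {d e : (Unit ⊕ Fin N) →₀ ℕ} (h : d ≤ e) :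
    wtExp wt w (e - d) = wtExp wt w e - wtExp wt w d := by
  have h1 : e - d + d = e := tsub_add_cancel_of_le h
  have h2 := wtExp_add wt w (e - d) d
  rw [h1] at h2; linarith

theorem coeff_sum_monomial (s : Finset ((Unit ⊕ Fin N) →₀ ℕ))
    (cf : ((Unit ⊕ Fin N) →₀ ℕ) → ℂ) (e : (Unit ⊕ Fin N) →₀ ℕ) :
    coeff e (∑ d ∈ s, monomial d (cf d)) = if e ∈ s then cf e else 0 := by
  rw [coeff_sum]
  simp_rw [coeff_monomial]
  exact Finset.sum_ite_eq' s e cf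

def wpart (μ : ℝ) (p : MvPolynomial (Unit ⊕ Fin N) ℂ) : MvPolynomial (Unit ⊕ Fin N) ℂ :=
  ∑ e ∈ p.support.filter (fun e => wtExp wt w e = μ), monomial e (coeff e p)

theorem coeff_wpart (μ : ℝ) (p : MvPolynomial (Unit ⊕ Fin N) ℂ) (e : (Unit ⊕ Fin N) →₀ ℕ) :
    coeff e (wpart wt w μ p) = if wtExp wt w e = μ then coeff e p else 0 := by
  rw [wpart, coeff_sum_monomial]
  simp only [Finset.mem_filter, mem_support_iff]
  by_cases h : wtExp wt w e = μ <;> by_cases h2 : coeff e p = 0 <;> simp [h, h2]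

theorem mem_support_wpart {μ : ℝ} {p : MvPolynomial (Unit ⊕ Fin N) ℂ}
    {e : (Unit ⊕ Fin N) →₀ ℕ} (h : e ∈ (wpart wt w μ p).support) :
    wtExp wt w e = μ ∧ e ∈ p.support := by
  rw [mem_support_iff, coeff_wpart] at h
  split_ifs at h with h1
  · exact ⟨h1, mem_support_iff.2 h⟩
  · exact absurd rfl h

theorem wpart_add (μ : ℝ) (p q : MvPolynomial (Unit ⊕ Fin N) ℂ) :
    wpart wt w μ (p + q) = wpart wt w μ p + wpart wt w μ q := by
  ext e
  simp only [coeff_wpart, coeff_add]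
  split <;> simp

theorem wpart_zero (μ : ℝ) : wpart wt w μ (0 : MvPolynomial (Unit ⊕ Fin N) ℂ) = 0 := by
  ext e; simp [coeff_wpart]

theorem wpart_sum {α : Type*} (s : Finset α) (f : α → MvPolynomial (Unit ⊕ Fin N) ℂ) (μ : ℝ) :
    wpart wt w μ (∑ a ∈ s, f a) = ∑ a ∈ s, wpart wt w μ (f a) := by
  induction s using Finset.cons_induction with
  | empty => simp [wpart_zero]
  | cons a s ha ih => rw [Finset.sum_cons, Finset.sum_cons, wpart_add, ih]

theorem wpart_eq_zero_of_lt (μ : ℝ) (p : MvPolynomial (Unit ⊕ Fin N) ℂ)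
    (h : ∀ e ∈ p.support, μ < wtExp wt w e) : wpart wt w μ p = 0 := by
  ext e
  rw [coeff_wpart]
  split_ifs with h1
  · by_contra hc
    have := h e (mem_support_iff.2 (by simpa using hc))
    rw [h1] at this; exact lt_irrefl _ this
  · simp

theorem wpart_mul_monomial (μ : ℝ) (p : MvPolynomial (Unit ⊕ Fin N) ℂ)
    (d : (Unit ⊕ Fin N) →₀ ℕ) (r : ℂ) :
    wpart wt w μ (p * monomial d r) =
      wpart wt w (μ - wtExp wt w d) p * monomial d r := by
  ext e
  rw [coeff_wpart, coeff_mul_monomial', coeff_mul_monomial', coeff_wpart]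
  by_cases hd : d ≤ e
  · simp only [hd, if_true]
    rw [wtExp_tsub wt w hd]
    simp only [sub_left_inj]
    split_ifs <;> simp
  · simp [hd]

theorem coeff_initialForm (h : MvPolynomial (Unit ⊕ Fin N) ℂ) (e : (Unit ⊕ Fin N) →₀ ℕ) :
    coeff e (initialForm wt w h) =
      if e ∈ h.support ∧ ∀ e' ∈ h.support, wtExp wt w e ≤ wtExp wt w e'
      then coeff e h else 0 := by
  rw [initialForm, coeff_sum_monomial]
  simp only [Finset.mem_filter]

theorem mem_support_initialForm (h : MvPolynomial (Unit ⊕ Fin N) ℂ)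
    (e : (Unit ⊕ Fin N) →₀ ℕ) :
    e ∈ (initialForm wt w h).support ↔
      e ∈ h.support ∧ ∀ e' ∈ h.support, wtExp wt w e ≤ wtExp wt w e' := by
  constructor
  · intro he
    rw [mem_support_iff, coeff_initialForm] at he
    split_ifs at he with h1
    · exact h1
    · exact absurd rfl he
  · intro h1
    rw [mem_support_iff, coeff_initialForm, if_pos h1]
    exact mem_support_iff.1 h1.1

theorem mem_support_mul {p q : MvPolynomial (Unit ⊕ Fin N) ℂ} {e : (Unit ⊕ Fin N) →₀ ℕ}
    (h : e ∈ (p * q).support) :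
    ∃ d1 ∈ p.support, ∃ d2 ∈ q.support, d1 + d2 = e := by
  have := MvPolynomial.support_mul p q h
  rwa [Finset.mem_add] at this

end GAuxSec

set_option maxHeartbeats 2000000 in
/-- Description of the Gröbner cone of special fiber weights of the
degeneration `I = ⟨m_j + t·g_j⟩`: (i) if `w_t + ⟨a, w⟩ > ⟨b_j, w⟩` for all `j`
and all exponents `a` of `g_j`, then the initial ideal of `I` is `⟨m₁,…,m_c⟩`;
(ii) conversely, if the initial ideal is `⟨m₁,…,m_c⟩` then the corresponding
weak inequalities hold. -/
theorem groebner_cone_of_special_fiber_weights {N c : ℕ}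
    (J : Fin c → Finset (Fin N)) (hJne : ∀ j, (J j).Nonempty)
    (hJdisj : ∀ j k, j ≠ k → Disjoint (J j) (J k))
    (b : Fin c → (Fin N →₀ ℕ)) (hb : ∀ j, b j = ∑ i ∈ J j, Finsupp.single i 1)
    (B : Fin c → ((Unit ⊕ Fin N) →₀ ℕ))
    (hB : ∀ j, B j = ∑ i ∈ J j, Finsupp.single (Sum.inr i) 1)
    (I₀ : Ideal (MvPolynomial (Fin N) ℂ))
    (hI₀ : I₀ = Ideal.span (Set.range fun j => monomial (b j) (1 : ℂ)))
    (g : Fin c → MvPolynomial (Fin N) ℂ) (hgne : ∀ j, g j ≠ 0)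
    (hg : ∀ j, ∀ a ∈ (g j).support, monomial a (1 : ℂ) ∉ I₀)
    (I : Ideal (MvPolynomial (Unit ⊕ Fin N) ℂ))
    (hI : I = Ideal.span (Set.range fun j =>
      monomial (B j) (1 : ℂ) + X (Sum.inl ()) * rename Sum.inr (g j)))
    (wt : ℝ) (w : Fin N → ℝ) :
    ((∀ j, ∀ a ∈ (g j).support,
        (∑ i, ((b j) i : ℝ) * w i) < wt + ∑ i, (a i : ℝ) * w i) →
      initialIdeal wt w I =
        Ideal.span (Set.range fun j => monomial (B j) (1 : ℂ))) ∧
    ((initialIdeal wt w I =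
        Ideal.span (Set.range fun j => monomial (B j) (1 : ℂ))) →
      ∀ j, ∀ a ∈ (g j).support,
        (∑ i, ((b j) i : ℝ) * w i) ≤ wt + ∑ i, (a i : ℝ) * w i) := by
  -- basic exponent facts
  have hBapp_inl : ∀ j, B j (Sum.inl ()) = 0 := by
    intro j
    rw [hB, Finsupp.finset_sum_apply]
    exact Finset.sum_eq_zero fun i _ => Finsupp.single_eq_of_ne (by simp)
  have hBapp_inr : ∀ j i, B j (Sum.inr i) = b j i := by
    intro j i
    rw [hB, hb, Finsupp.finset_sum_apply, Finsupp.finset_sum_apply]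
    refine Finset.sum_congr rfl fun i' _ => ?_
    by_cases h : i' = i
    · subst h; simp
    · rw [Finsupp.single_eq_of_ne' (by simp [h]), Finsupp.single_eq_of_ne' h]
  have hWB : ∀ j, wtExp wt w (B j) = ∑ i, ((b j) i : ℝ) * w i := by
    intro j
    unfold wtExp
    rw [hBapp_inl]
    simp only [Nat.cast_zero, mul_zero, zero_add]
    exact Finset.sum_congr rfl fun i _ => by rw [hBapp_inr]
  have hbapp : ∀ j i, b j i = if i ∈ J j then 1 else 0 := by
    intro j i
    rw [hb, Finsupp.finset_sum_apply]
    simp_rw [Finsupp.single_apply]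
    exact Finset.sum_ite_eq' (J j) i (fun _ => 1)
  have hmemB : ∀ p : MvPolynomial (Unit ⊕ Fin N) ℂ,
      p ∈ Ideal.span (Set.range fun j => monomial (B j) (1 : ℂ)) ↔
        ∀ e ∈ p.support, ∃ j, B j ≤ e := by
    intro p
    have hr : (Set.range fun j => monomial (B j) (1 : ℂ)) =
        (fun s => monomial s (1 : ℂ)) '' Set.range B := by
      rw [← Set.range_comp]; rfl
    rw [hr, mem_ideal_span_monomial_image]
    constructor
    · intro h e he
      obtain ⟨si, ⟨j, rfl⟩, hle⟩ := h e he
      exact ⟨j, hle⟩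
    · intro h e he
      obtain ⟨j, hle⟩ := h e he
      exact ⟨B j, ⟨j, rfl⟩, hle⟩
  have hmemb : ∀ p : MvPolynomial (Fin N) ℂ,
      p ∈ Ideal.span (Set.range fun j => monomial (b j) (1 : ℂ)) ↔
        ∀ e ∈ p.support, ∃ j, b j ≤ e := by
    intro p
    have hr : (Set.range fun j => monomial (b j) (1 : ℂ)) =
        (fun s => monomial s (1 : ℂ)) '' Set.range b := by
      rw [← Set.range_comp]; rfl
    rw [hr, mem_ideal_span_monomial_image]
    constructor
    · intro h e he
      obtain ⟨si, ⟨j, rfl⟩, hle⟩ := h e he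
      exact ⟨j, hle⟩
    · intro h e he
      obtain ⟨j, hle⟩ := h e he
      exact ⟨b j, ⟨j, rfl⟩, hle⟩
  set ea : (Fin N →₀ ℕ) → ((Unit ⊕ Fin N) →₀ ℕ) :=
    fun a => Finsupp.single (Sum.inl ()) 1 + a.mapDomain Sum.inr with hea
  have hea_inl : ∀ a, ea a (Sum.inl ()) = 1 := by
    intro a
    rw [hea]
    simp only [Finsupp.add_apply, Finsupp.single_eq_same]
    rw [Finsupp.mapDomain_notin_range _ _ (by simp)]
    norm_num
  have hea_inr : ∀ a i, ea a (Sum.inr i) = a i := by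
    intro a i
    rw [hea]
    simp only [Finsupp.add_apply]
    rw [Finsupp.single_eq_of_ne (by simp), Finsupp.mapDomain_apply Sum.inr_injective]
    simp
  have hWea : ∀ a, wtExp wt w (ea a) = wt + ∑ i, (a i : ℝ) * w i := by
    intro a
    unfold wtExp
    rw [hea_inl]
    simp only [Nat.cast_one, mul_one]
    congr 1
    exact Finset.sum_congr rfl fun i _ => by rw [hea_inr]
  have hea_inj : Function.Injective ea := by
    intro a1 a2 h
    refine Finsupp.ext fun i => ?_
    have := congrArg (fun v => v (Sum.inr i)) h
    simpa only [hea_inr] using this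
  have hXg : ∀ G : MvPolynomial (Fin N) ℂ,
      X (Sum.inl ()) * rename Sum.inr G = ∑ a ∈ G.support, monomial (ea a) (coeff a G) := by
    intro G
    conv_lhs => rw [← support_sum_monomial_coeff G]
    rw [map_sum, Finset.mul_sum]
    refine Finset.sum_congr rfl fun a _ => ?_
    rw [rename_monomial]
    have hX : (X (Sum.inl ()) : MvPolynomial (Unit ⊕ Fin N) ℂ) =
        monomial (Finsupp.single (Sum.inl ()) 1) 1 := rfl
    rw [hX, monomial_mul, one_mul]
  have hcoeffXg : ∀ (G : MvPolynomial (Fin N) ℂ) a₀,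
      coeff (ea a₀) (X (Sum.inl ()) * rename Sum.inr G) = coeff a₀ G := by
    intro G a₀
    rw [hXg, coeff_sum]
    simp_rw [coeff_monomial]
    rw [Finset.sum_eq_single a₀]
    · rw [if_pos rfl]
    · intro a _ hne
      exact if_neg fun hc => hne (hea_inj hc)
    · intro h
      rw [if_pos rfl]
      exact (mem_support_iff.not_left.1 h).symm ▸ (notMem_support_iff.1 h)
  have hsuppXg : ∀ (G : MvPolynomial (Fin N) ℂ) e,
      e ∈ (X (Sum.inl ()) * rename Sum.inr G).support → ∃ a ∈ G.support, e = ea a := by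
    intro G e he
    rw [mem_support_iff, hXg, coeff_sum] at he
    simp_rw [coeff_monomial] at he
    by_contra hc
    push_neg at hc
    refine he (Finset.sum_eq_zero fun a ha => ?_)
    exact if_neg fun h => hc a ha h.symm
  have hBnotXg : ∀ (G : MvPolynomial (Fin N) ℂ) j,
      coeff (B j) (X (Sum.inl ()) * rename Sum.inr G) = 0 := by
    intro G j
    by_contra hc
    obtain ⟨a, _, hBa⟩ := hsuppXg G (B j) (mem_support_iff.2 hc)
    have : (0 : ℕ) = 1 := by rw [← hBapp_inl j, hBa, hea_inl]
    exact absurd this (by simp)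
  set F : Fin c → MvPolynomial (Unit ⊕ Fin N) ℂ :=
    fun j => monomial (B j) (1 : ℂ) + X (Sum.inl ()) * rename Sum.inr (g j) with hF
  have hcoeffBF : ∀ j, coeff (B j) (F j) = 1 := by
    intro j
    rw [hF]
    simp only [coeff_add, coeff_monomial, if_pos rfl, hBnotXg, add_zero]
    norm_num
  have hFne : ∀ j, F j ≠ 0 := by
    intro j h0
    have := hcoeffBF j
    rw [h0] at this
    simpa using this
  have hsuppF : ∀ j e, e ∈ (F j).support → e = B j ∨ ∃ a ∈ (g j).support, e = ea a := by
    intro j e he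
    rw [mem_support_iff, hF, coeff_add] at he
    by_cases h1 : coeff e (monomial (B j) (1 : ℂ)) = 0
    · right
      apply hsuppXg
      rw [mem_support_iff]
      intro h2
      rw [h1, h2] at he
      simp at he
    · left
      rw [coeff_monomial] at h1
      split_ifs at h1 with h2
      · exact h2.symm
      · exact absurd rfl h1
  have hdisj0 : ∀ j k, j ≠ k → ∀ x, B j x = 0 ∨ B k x = 0 := by
    intro j k hjk x
    cases x with
    | inl u => left; cases u; exact hBapp_inl j
    | inr i =>
      rw [hBapp_inr, hBapp_inr, hbapp, hbapp]
      by_cases hi : i ∈ J j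
      · right
        rw [if_neg (Finset.disjoint_left.1 (hJdisj j k hjk) hi)]
      · left
        rw [if_neg hi]
  have haddle : ∀ j k (E : (Unit ⊕ Fin N) →₀ ℕ), j ≠ k → B j ≤ E → B k ≤ E →
      B j + B k ≤ E := by
    intro j k E hjk h1 h2
    rw [Finsupp.le_def] at h1 h2 ⊢
    intro x
    rw [Finsupp.add_apply]
    rcases hdisj0 j k hjk x with h | h
    · rw [h]; simpa using h2 x
    · rw [h]; simpa using h1 x
  have hsuble : ∀ j k (d : (Unit ⊕ Fin N) →₀ ℕ), k ≠ j → B k ≤ d + B j → B k ≤ d := by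
    intro j k d hkj hle
    rw [Finsupp.le_def] at hle ⊢
    intro x
    have := hle x
    rw [Finsupp.add_apply] at this
    rcases hdisj0 k j hkj x with h | h
    · rw [h]; exact Nat.zero_le _
    · omega
  rcases Nat.eq_zero_or_pos c with hc0 | hcpos
  · subst hc0
    constructor
    · intro _
      have hrange : (Set.range F) = ∅ := by
        rw [Set.range_eq_empty]
      have hIbot : I = ⊥ := by rw [hI, hrange, Ideal.span_empty]
      have h1 : initialIdeal wt w I = ⊥ := by
        unfold initialIdeal
        have : {q | ∃ h ∈ I, h ≠ 0 ∧ q = initialForm wt w h} = ∅ := by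
          ext q
          simp only [Set.mem_setOf_eq, Set.mem_empty_iff_false, iff_false, not_exists]
          rintro h ⟨hmem, hne, _⟩
          rw [hIbot, Ideal.mem_bot] at hmem
          exact hne hmem
        rw [this, Ideal.span_empty]
      rw [h1, Set.range_eq_empty, Ideal.span_empty]
    · intro _ j
      exact absurd j.isLt (by omega)
  constructor
  · intro Hstrict
    have hstrict' : ∀ j, ∀ a ∈ (g j).support,
        wtExp wt w (B j) < wtExp wt w (ea a) := by
      intro j a ha
      rw [hWB, hWea]
      exact Hstrict j a ha
    have hBjsupp : ∀ j, B j ∈ (F j).support :=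
      fun j => mem_support_iff.2 (by rw [hcoeffBF]; norm_num)
    have hminF : ∀ j e, e ∈ (F j).support → wtExp wt w (B j) ≤ wtExp wt w e := by
      intro j e he
      rcases hsuppF j e he with h | ⟨a, ha, rfl⟩
      · rw [h]
      · exact le_of_lt (hstrict' j a ha)
    have hinitF : ∀ j, initialForm wt w (F j) = monomial (B j) 1 := by
      intro j
      ext e
      rw [coeff_initialForm, coeff_monomial]
      by_cases hBe : B j = e
      · subst hBe
        rw [if_pos ⟨hBjsupp j, fun e' he' => hminF j e' he'⟩, if_pos rfl, hcoeffBF]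
      · rw [if_neg, if_neg hBe]
        rintro ⟨hes, hemin⟩
        rcases hsuppF j e hes with h | ⟨a, ha, rfl⟩
        · exact hBe h.symm
        · exact absurd (hemin _ (hBjsupp j)) (not_le.2 (hstrict' j a ha))
    apply le_antisymm
    · unfold initialIdeal
      rw [Ideal.span_le]
      rintro q ⟨h, hhI, hhne, rfl⟩
      rw [SetLike.mem_coe, hmemB]
      intro e he
      rw [mem_support_initialForm] at he
      obtain ⟨hes, hemin⟩ := he
      rw [hI] at hhI
      obtain ⟨q0, hrep0⟩ := Ideal.mem_span_range_iff_exists_fun.1 hhI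
      set D : Finset ℝ := Finset.univ.biUnion (fun k : Fin c =>
        (g k).support.image (fun a => wtExp wt w (ea a) - wtExp wt w (B k))) with hDdef
      have hDne : D.Nonempty := by
        obtain ⟨a, ha⟩ := MvPolynomial.support_nonempty.2 (hgne ⟨0, hcpos⟩)
        exact ⟨_, Finset.mem_biUnion.2 ⟨⟨0, hcpos⟩, Finset.mem_univ _,
          Finset.mem_image.2 ⟨a, ha, rfl⟩⟩⟩
      set δ := D.min' hDne with hδdef
      have hδle : ∀ k, ∀ a ∈ (g k).support,
          δ ≤ wtExp wt w (ea a) - wtExp wt w (B k) := by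
        intro k a ha
        exact Finset.min'_le _ _ (Finset.mem_biUnion.2
          ⟨k, Finset.mem_univ _, Finset.mem_image.2 ⟨a, ha, rfl⟩⟩)
      have hδpos : 0 < δ := by
        obtain ⟨k, -, hk⟩ := Finset.mem_biUnion.1 (D.min'_mem hDne)
        obtain ⟨a, ha, hval⟩ := Finset.mem_image.1 hk
        have := hstrict' k a ha
        rw [hδdef, ← hval]
        linarith
      set κ : ℝ → ℕ := fun lam => (⌈(wtExp wt w e - lam) / δ⌉).toNat with hκdef
      have hκ1 : ∀ lam, lam < wtExp wt w e → 1 ≤ κ lam := by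
        intro lam hl
        have h0 : (0:ℤ) < ⌈(wtExp wt w e - lam) / δ⌉ :=
          Int.ceil_pos.2 (div_pos (by linarith) hδpos)
        show 1 ≤ (⌈(wtExp wt w e - lam) / δ⌉).toNat
        omega
      have hκ2 : ∀ lam lam', lam < wtExp wt w e → lam + δ ≤ lam' →
          κ lam' + 1 ≤ κ lam := by
        intro lam lam' hlam hle
        have h1 : (wtExp wt w e - lam') / δ ≤ (wtExp wt w e - lam) / δ - 1 := by
          have h2 : wtExp wt w e - lam' ≤ (wtExp wt w e - lam) - δ := by linarith
          calc (wtExp wt w e - lam') / δ ≤ ((wtExp wt w e - lam) - δ) / δ :=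
              (div_le_div_iff_of_pos_right hδpos).2 h2
            _ = (wtExp wt w e - lam) / δ - 1 := by
              rw [sub_div, div_self (ne_of_gt hδpos)]
        have h2 : ⌈(wtExp wt w e - lam') / δ⌉ ≤ ⌈(wtExp wt w e - lam) / δ⌉ - 1 := by
          calc ⌈(wtExp wt w e - lam') / δ⌉ ≤ ⌈(wtExp wt w e - lam) / δ - 1⌉ :=
              Int.ceil_le_ceil h1
            _ = ⌈(wtExp wt w e - lam) / δ⌉ - 1 := Int.ceil_sub_one _
        have h3 : (0:ℤ) < ⌈(wtExp wt w e - lam) / δ⌉ :=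
          Int.ceil_pos.2 (div_pos (by linarith) hδpos)
        show (⌈(wtExp wt w e - lam') / δ⌉).toNat + 1 ≤ (⌈(wtExp wt w e - lam) / δ⌉).toNat
        omega
      set G : ℕ := ∑ k, (g k).support.card with hGdef
      set K : ℕ := c * G with hKdef
      set Φ : (Fin c → MvPolynomial (Unit ⊕ Fin N) ℂ) → ℕ := fun q =>
        ∑ j, ∑ d ∈ (q j).support, (K+1) ^ (κ (wtExp wt w d + wtExp wt w (B j)))
        with hΦdef
      suffices key : ∀ (n : ℕ) (q : Fin c → MvPolynomial (Unit ⊕ Fin N) ℂ),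
          (∑ j, q j * F j) = h → Φ q ≤ n → ∃ j, B j ≤ e by
        exact key (Φ q0) q0 hrep0 le_rfl
      intro n
      induction n with
      | zero =>
        intro q hrep hΦ0
        exfalso
        have hqj : ∃ j, q j ≠ 0 := by
          by_contra hall
          push_neg at hall
          apply hhne
          rw [← hrep]
          exact Finset.sum_eq_zero fun j _ => by rw [hall j, zero_mul]
        obtain ⟨j, hj⟩ := hqj
        obtain ⟨d, hd⟩ := MvPolynomial.support_nonempty.2 hj
        have hpos : 0 < Φ q := by
          rw [hΦdef]
          refine Finset.sum_pos' (fun j _ => Nat.zero_le _) ⟨j, Finset.mem_univ _, ?_⟩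
          exact Finset.sum_pos' (fun d _ => Nat.zero_le _)
            ⟨d, hd, pow_pos (Nat.succ_pos K) _⟩
        omega
      | succ n ih =>
        intro q hrep hΦn
        have hqne : ∃ j, q j ≠ 0 := by
          by_contra hall
          push_neg at hall
          apply hhne
          rw [← hrep]
          exact Finset.sum_eq_zero fun j _ => by rw [hall j, zero_mul]
        set T : Finset ℝ := Finset.univ.biUnion (fun j =>
          (q j).support.image (fun d => wtExp wt w d + wtExp wt w (B j))) with hTdef
        have hTne : T.Nonempty := by
          obtain ⟨j, hj⟩ := hqne
          obtain ⟨d, hd⟩ := MvPolynomial.support_nonempty.2 hj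
          exact ⟨_, Finset.mem_biUnion.2 ⟨j, Finset.mem_univ _,
            Finset.mem_image.2 ⟨d, hd, rfl⟩⟩⟩
        set μ := T.min' hTne with hμdef
        have hμle : ∀ j, ∀ d ∈ (q j).support,
            μ ≤ wtExp wt w d + wtExp wt w (B j) := by
          intro j d hd
          exact Finset.min'_le _ _ (Finset.mem_biUnion.2 ⟨j, Finset.mem_univ _,
            Finset.mem_image.2 ⟨d, hd, rfl⟩⟩)
        obtain ⟨jm, -, hjm⟩ := Finset.mem_biUnion.1 (T.min'_mem hTne)
        obtain ⟨dm, hdm, hdmμ⟩ := Finset.mem_image.1 hjm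
        by_cases hcase : wtExp wt w e ≤ μ
        · have hce : coeff e h ≠ 0 := mem_support_iff.1 hes
          rw [← hrep, coeff_sum] at hce
          obtain ⟨j0, -, hj0⟩ := Finset.exists_ne_zero_of_sum_ne_zero hce
          have hFj0 : q j0 * F j0 = q j0 * monomial (B j0) 1 +
              q j0 * (X (Sum.inl ()) * rename Sum.inr (g j0)) := by
            rw [hF]; ring
          rw [hFj0, coeff_add] at hj0
          by_cases hA : coeff e (q j0 * monomial (B j0) 1) = 0
          · exfalso
            have hB2 : coeff e (q j0 * (X (Sum.inl ()) * rename Sum.inr (g j0))) ≠ 0 := by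
              intro h0
              rw [hA, h0] at hj0
              simp at hj0
            obtain ⟨d1, hd1, d2, hd2, hde⟩ := mem_support_mul (mem_support_iff.2 hB2)
            obtain ⟨a, ha, rfl⟩ := hsuppXg _ _ hd2
            have h1 := hμle j0 d1 hd1
            have h2 := hstrict' j0 a ha
            rw [← hde, wtExp_add] at hcase
            linarith
          · obtain ⟨d1, hd1, d2, hd2, hde⟩ := mem_support_mul (mem_support_iff.2 hA)
            rw [support_monomial, if_neg one_ne_zero, Finset.mem_singleton] at hd2
            subst hd2
            exact ⟨j0, hde ▸ le_add_self⟩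
        · push_neg at hcase
          set p : Fin c → MvPolynomial (Unit ⊕ Fin N) ℂ :=
            fun j => wpart wt w (μ - wtExp wt w (B j)) (q j) with hpdef
          have hpsupp : ∀ j, ∀ d ∈ (p j).support,
              wtExp wt w d = μ - wtExp wt w (B j) ∧ d ∈ (q j).support :=
            fun j d hd => mem_support_wpart wt w hd
          have hsum0 : ∑ j, p j * monomial (B j) (1:ℂ) = 0 := by
            have step1 : ∀ j : Fin c, p j * monomial (B j) (1:ℂ) =
                wpart wt w μ (q j * F j) := by
              intro j
              have h1 : p j * monomial (B j) (1:ℂ) =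
                  wpart wt w μ (q j * monomial (B j) 1) := by
                rw [wpart_mul_monomial]
              rw [h1]
              have hFj : q j * F j = q j * monomial (B j) 1 +
                  q j * (X (Sum.inl ()) * rename Sum.inr (g j)) := by
                rw [hF]; ring
              rw [hFj, wpart_add]
              have hz : wpart wt w μ
                  (q j * (X (Sum.inl ()) * rename Sum.inr (g j))) = 0 := by
                apply wpart_eq_zero_of_lt
                intro e' he'
                obtain ⟨d1, hd1, d2, hd2, hde⟩ := mem_support_mul he'
                obtain ⟨a, ha, rfl⟩ := hsuppXg _ _ hd2
                have h1 := hμle j d1 hd1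
                have h2 := hstrict' j a ha
                rw [← hde, wtExp_add]
                linarith
              rw [hz, add_zero]
            rw [Finset.sum_congr rfl (fun j _ => step1 j), ← wpart_sum, hrep]
            apply wpart_eq_zero_of_lt
            intro e' he'
            have := hemin e' he'
            linarith
          set EE : Finset ((Unit ⊕ Fin N) →₀ ℕ) := Finset.univ.biUnion
            (fun j => (p j * monomial (B j) (1:ℂ)).support) with hEEdef
          set cc : Fin c → ((Unit ⊕ Fin N) →₀ ℕ) → ℂ :=
            fun j E => coeff E (p j * monomial (B j) 1) with hccdef
          have hccsum : ∀ E, ∑ k, cc k E = 0 := by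
            intro E
            show ∑ k, coeff E (p k * monomial (B k) (1:ℂ)) = 0
            have h0 : coeff E (∑ k, p k * monomial (B k) (1:ℂ)) = 0 := by
              rw [hsum0, coeff_zero]
            rw [coeff_sum] at h0
            exact h0
          have hccB : ∀ j E, cc j E ≠ 0 → B j ≤ E := by
            intro j E hne
            have h2 : coeff E (p j * monomial (B j) (1:ℂ)) ≠ 0 := hne
            rw [coeff_mul_monomial'] at h2
            by_cases hle : B j ≤ E
            · exact hle
            · rw [if_neg hle] at h2; exact absurd rfl h2
          have hccmem : ∀ j E, cc j E ≠ 0 → E - B j ∈ (p j).support := by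
            intro j E hne
            have hle := hccB j E hne
            have h2 : coeff E (p j * monomial (B j) (1:ℂ)) ≠ 0 := hne
            rw [coeff_mul_monomial', if_pos hle, mul_one] at h2
            exact mem_support_iff.2 h2
          have hccW : ∀ j E, cc j E ≠ 0 → wtExp wt w E = μ := by
            intro j E hne
            have hle := hccB j E hne
            have h3 := (hpsupp j (E - B j) (hccmem j E hne)).1
            rw [wtExp_tsub wt w hle] at h3
            linarith
          set k0 : ((Unit ⊕ Fin N) →₀ ℕ) → Fin c :=
            fun E => if hE : ∃ k, cc k E ≠ 0 then hE.choose else ⟨0, hcpos⟩ with hk0def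
          have hk0 : ∀ E, (∃ k, cc k E ≠ 0) → cc (k0 E) E ≠ 0 := by
            intro E hE
            show cc (if hE' : ∃ k, cc k E ≠ 0 then hE'.choose else ⟨0, hcpos⟩) E ≠ 0
            rw [dif_pos hE]
            exact hE.choose_spec
          set σf : Fin c → Fin c → ((Unit ⊕ Fin N) →₀ ℕ) →
              MvPolynomial (Unit ⊕ Fin N) ℂ := fun j k E =>
            (if k = k0 E ∧ j ≠ k then monomial (E - B j - B k) (cc j E) else 0)
            - (if j = k0 E ∧ k ≠ j then monomial (E - B j - B k) (cc k E) else 0)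
            with hσdef
          set H : Fin c → Fin c → MvPolynomial (Unit ⊕ Fin N) ℂ :=
            fun j k => ∑ E ∈ EE, σf j k E with hHdef
          have hterm : ∀ j k E, σf j k E * (monomial (B k) 1 * monomial (B j) 1) =
              (if k = k0 E ∧ j ≠ k then monomial E (cc j E) else 0)
              - (if j = k0 E ∧ k ≠ j then monomial E (cc k E) else 0) := by
            intro j k E
            show ((if k = k0 E ∧ j ≠ k then monomial (E - B j - B k) (cc j E) else 0)
              - (if j = k0 E ∧ k ≠ j then monomial (E - B j - B k) (cc k E) else 0))
                * (monomial (B k) 1 * monomial (B j) 1) = _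
            rw [sub_mul]
            congr 1
            · split_ifs with hcond
              · by_cases hccj : cc j E = 0
                · rw [hccj, monomial_zero, monomial_zero, zero_mul]
                · have hjE : B j ≤ E := hccB j E hccj
                  have hkE : B k ≤ E := by
                    have h5 := hk0 E ⟨j, hccj⟩
                    rw [← hcond.1] at h5
                    exact hccB k E h5
                  have hjk : B j + B k ≤ E := haddle j k E hcond.2 hjE hkE
                  have hexp : (E - B j - B k) + (B k + B j) = E := by
                    rw [tsub_tsub, add_comm (B k) (B j), tsub_add_cancel_of_le hjk]
                  rw [monomial_mul, monomial_mul, hexp, mul_one, mul_one]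
              · rw [zero_mul]
            · split_ifs with hcond
              · by_cases hcck : cc k E = 0
                · rw [hcck, monomial_zero, monomial_zero, zero_mul]
                · have hkE : B k ≤ E := hccB k E hcck
                  have hjE : B j ≤ E := by
                    have h5 := hk0 E ⟨k, hcck⟩
                    rw [← hcond.1] at h5
                    exact hccB j E h5
                  have hjk : B j + B k ≤ E := haddle j k E hcond.2.symm hjE hkE
                  have hexp : (E - B j - B k) + (B k + B j) = E := by
                    rw [tsub_tsub, add_comm (B k) (B j), tsub_add_cancel_of_le hjk]
                  rw [monomial_mul, monomial_mul, hexp, mul_one, mul_one]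
              · rw [zero_mul]
          have hHm : ∀ j, (∑ k, H j k * monomial (B k) (1:ℂ)) = p j := by
            intro j
            have hmul : (∑ k, H j k * monomial (B k) (1:ℂ)) * monomial (B j) 1 =
                p j * monomial (B j) 1 := by
              rw [Finset.sum_mul]
              calc ∑ k, H j k * monomial (B k) 1 * monomial (B j) 1
                  = ∑ k, ∑ E ∈ EE, σf j k E * (monomial (B k) 1 * monomial (B j) 1) := by
                    refine Finset.sum_congr rfl fun k _ => ?_
                    show (∑ E ∈ EE, σf j k E) * monomial (B k) 1 * monomial (B j) 1 = _
                    rw [Finset.sum_mul, Finset.sum_mul]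
                    exact Finset.sum_congr rfl fun E _ => by rw [mul_assoc]
                _ = ∑ E ∈ EE, ∑ k, σf j k E * (monomial (B k) 1 * monomial (B j) 1) :=
                    Finset.sum_comm
                _ = ∑ E ∈ EE, monomial E (cc j E) := by
                    refine Finset.sum_congr rfl fun E hE => ?_
                    rw [Finset.sum_congr rfl (fun k _ => hterm j k E)]
                    rw [Finset.sum_sub_distrib]
                    by_cases hj : j = k0 E
                    · have h1 : ∑ k, (if k = k0 E ∧ j ≠ k then monomial E (cc j E)
                          else 0) = 0 := by
                        apply Finset.sum_eq_zero
                        intro k _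
                        rw [if_neg]
                        rintro ⟨hh1, hh2⟩
                        exact hh2 (by rw [hj, hh1])
                      have h2 : ∑ k, (if j = k0 E ∧ k ≠ j then monomial E (cc k E)
                          else 0) = ∑ k, (if k ≠ j then monomial E (cc k E) else 0) := by
                        refine Finset.sum_congr rfl fun k _ => ?_
                        by_cases hk : k ≠ j
                        · rw [if_pos ⟨hj, hk⟩, if_pos hk]
                        · rw [if_neg (fun hc => hk hc.2), if_neg hk]
                      have h3 : ∑ k, (if k ≠ j then monomial E (cc k E) else 0) =
                          monomial E (∑ k, if k ≠ j then cc k E else 0) := by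
                        rw [map_sum (monomial E)]
                        exact Finset.sum_congr rfl fun k _ => by split_ifs <;> simp
                      have h4 : (∑ k, if k ≠ j then cc k E else 0) = - cc j E := by
                        have h5 := hccsum E
                        have h6 : ∑ k, cc k E =
                            (∑ k, if k ≠ j then cc k E else 0) + cc j E := by
                          have h7 : ∀ k : Fin c, cc k E =
                              (if k ≠ j then cc k E else 0) +
                              (if k = j then cc k E else 0) := by
                            intro k
                            by_cases hk : k = j
                            · subst hk; simp
                            · simp [hk]
                          rw [Finset.sum_congr rfl (fun k _ => h7 k),
                            Finset.sum_add_distrib]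
                          congr 1
                          rw [Finset.sum_ite_eq' Finset.univ j (fun k => cc k E),
                            if_pos (Finset.mem_univ j)]
                        rw [h5] at h6
                        linear_combination - h6
                      rw [h1, h2, h3, h4, zero_sub, map_neg, neg_neg]
                    · have h1 : ∑ k, (if k = k0 E ∧ j ≠ k then monomial E (cc j E)
                          else 0) = monomial E (cc j E) := by
                        rw [Finset.sum_eq_single (k0 E)]
                        · rw [if_pos ⟨rfl, hj⟩]
                        · intro k _ hk
                          rw [if_neg (fun hc => hk hc.1)]
                        · intro hk
                          exact absurd (Finset.mem_univ _) hk
                      have h2 : ∑ k, (if j = k0 E ∧ k ≠ j then monomial E (cc k E)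
                          else 0) = 0 :=
                        Finset.sum_eq_zero fun k _ => if_neg (fun hc => hj hc.1)
                      rw [h1, h2, sub_zero]
                _ = p j * monomial (B j) 1 := by
                    refine (Finset.sum_subset
                      (fun E hE => Finset.mem_biUnion.2 ⟨j, Finset.mem_univ _, hE⟩)
                      (fun E _ hE => ?_)).symm.trans
                      (support_sum_monomial_coeff (p j * monomial (B j) 1))
                    have hz : cc j E = 0 := notMem_support_iff.1 hE
                    rw [hz, monomial_zero]
            exact mul_right_cancel₀
              (by rw [Ne, monomial_eq_zero]; exact one_ne_zero) hmul
          have hHanti : ∀ j k, H k j = - H j k := by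
            intro j k
            show ∑ E ∈ EE, σf k j E = - ∑ E ∈ EE, σf j k E
            rw [← Finset.sum_neg_distrib]
            refine Finset.sum_congr rfl fun E _ => ?_
            show (if j = k0 E ∧ k ≠ j then monomial (E - B k - B j) (cc k E) else 0)
              - (if k = k0 E ∧ j ≠ k then monomial (E - B k - B j) (cc j E) else 0)
              = -((if k = k0 E ∧ j ≠ k then monomial (E - B j - B k) (cc j E) else 0)
                - (if j = k0 E ∧ k ≠ j then monomial (E - B j - B k) (cc k E) else 0))
            rw [neg_sub]
            have hsub : E - B k - B j = E - B j - B k := by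
              rw [tsub_tsub, tsub_tsub, add_comm]
            rw [hsub]
          have hS1 : (∑ j, ∑ k, H j k * F k * F j) = 0 := by
            have h1 : (∑ j, ∑ k, H j k * F k * F j) =
                - (∑ j, ∑ k, H j k * F k * F j) := by
              conv_lhs => rw [Finset.sum_comm]
              rw [← Finset.sum_neg_distrib]
              refine Finset.sum_congr rfl fun a _ => ?_
              rw [← Finset.sum_neg_distrib]
              refine Finset.sum_congr rfl fun bb _ => ?_
              rw [hHanti a bb]
              ring
            have h2 : (∑ j, ∑ k, H j k * F k * F j) +
                (∑ j, ∑ k, H j k * F k * F j) = 0 := by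
              nth_rewrite 2 [h1]
              ring
            have h3 : (2:ℂ) • (∑ j, ∑ k, H j k * F k * F j) = 0 := by
              rw [two_smul]; exact h2
            rcases smul_eq_zero.1 h3 with h4 | h4
            · exact absurd h4 two_ne_zero
            · exact h4
          have hpF : ∑ j, p j * F j =
              - ∑ j, ∑ k, H j k * (X (Sum.inl ()) * rename Sum.inr (g k)) * F j := by
            have hmF : ∀ k, monomial (B k) (1:ℂ) =
                F k - X (Sum.inl ()) * rename Sum.inr (g k) := by
              intro k; rw [hF]; ring
            calc ∑ j, p j * F j
                = ∑ j, (∑ k, H j k * monomial (B k) (1:ℂ)) * F j := by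
                  exact Finset.sum_congr rfl fun j _ => by rw [hHm j]
              _ = ∑ j, ∑ k, (H j k * F k * F j
                    - H j k * (X (Sum.inl ()) * rename Sum.inr (g k)) * F j) := by
                  refine Finset.sum_congr rfl fun j _ => ?_
                  rw [Finset.sum_mul]
                  refine Finset.sum_congr rfl fun k _ => ?_
                  rw [hmF k]
                  ring
              _ = (∑ j, ∑ k, H j k * F k * F j)
                  - ∑ j, ∑ k, H j k * (X (Sum.inl ()) * rename Sum.inr (g k)) * F j := by
                  rw [← Finset.sum_sub_distrib]
                  exact Finset.sum_congr rfl fun j _ => by rw [Finset.sum_sub_distrib]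
              _ = - ∑ j, ∑ k, H j k * (X (Sum.inl ()) * rename Sum.inr (g k)) * F j := by
                  rw [hS1, zero_sub]
          set q' : Fin c → MvPolynomial (Unit ⊕ Fin N) ℂ := fun j =>
            q j - p j - ∑ k, H j k * (X (Sum.inl ()) * rename Sum.inr (g k)) with hq'def
          have hrep' : ∑ j, q' j * F j = h := by
            have hexpand : ∀ j, q' j * F j = q j * F j - p j * F j
                - (∑ k, H j k * (X (Sum.inl ()) * rename Sum.inr (g k))) * F j := by
              intro j
              show (q j - p j - ∑ k, H j k * (X (Sum.inl ()) * rename Sum.inr (g k)))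
                * F j = _
              ring
            rw [Finset.sum_congr rfl (fun j _ => hexpand j), Finset.sum_sub_distrib,
              Finset.sum_sub_distrib, hrep, hpF]
            have hmm : ∑ j, (∑ k, H j k * (X (Sum.inl ()) * rename Sum.inr (g k))) * F j
                = ∑ j, ∑ k, H j k * (X (Sum.inl ()) * rename Sum.inr (g k)) * F j :=
              Finset.sum_congr rfl fun j _ => Finset.sum_mul _ _ _
            rw [hmm]
            ring
          have hsuppq' : ∀ j, (q' j).support ⊆
              ((q j).support \ (p j).support) ∪
              (∑ k, H j k * (X (Sum.inl ()) * rename Sum.inr (g k))).support := by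
            intro j d hd
            rw [mem_support_iff] at hd
            have hdq' : coeff d (q' j) = (coeff d (q j) - coeff d (p j))
                - coeff d (∑ k, H j k * (X (Sum.inl ()) * rename Sum.inr (g k))) := by
              show coeff d (q j - p j - ∑ k, H j k *
                (X (Sum.inl ()) * rename Sum.inr (g k))) = _
              rw [coeff_sub, coeff_sub]
            rw [Finset.mem_union]
            by_cases h2 : coeff d (∑ k, H j k *
                (X (Sum.inl ()) * rename Sum.inr (g k))) = 0
            · left
              have h3 : coeff d (q j) - coeff d (p j) ≠ 0 := by
                intro h4
                rw [hdq', h4, h2, sub_zero] at hd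
                exact hd rfl
              have h5 : coeff d (p j) =
                  if wtExp wt w d = μ - wtExp wt w (B j) then coeff d (q j) else 0 := by
                show coeff d (wpart wt w (μ - wtExp wt w (B j)) (q j)) = _
                rw [coeff_wpart]
              rw [Finset.mem_sdiff]
              constructor
              · rw [mem_support_iff]
                intro h6
                rw [h5, h6] at h3
                split_ifs at h3 <;> simp at h3
              · intro hmem
                have h7 := (hpsupp j d hmem).1
                rw [h5, if_pos h7] at h3
                simp at h3
            · right
              exact mem_support_iff.2 h2
          have hHmem : ∀ j k, ∀ d ∈ (H j k).support,
              (∃ E ∈ EE, d = E - B j - B k) ∧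
              wtExp wt w d = μ - wtExp wt w (B j) - wtExp wt w (B k) := by
            intro j k d hd
            rw [mem_support_iff] at hd
            have h1 : ∃ E ∈ EE, coeff d (σf j k E) ≠ 0 := by
              by_contra hall
              push_neg at hall
              apply hd
              show coeff d (∑ E ∈ EE, σf j k E) = 0
              rw [coeff_sum]
              exact Finset.sum_eq_zero hall
            obtain ⟨E, hE, hcE⟩ := h1
            have h3 : coeff d (if k = k0 E ∧ j ≠ k
                  then monomial (E - B j - B k) (cc j E) else 0) ≠ 0 ∨
                coeff d (if j = k0 E ∧ k ≠ j
                  then monomial (E - B j - B k) (cc k E) else 0) ≠ 0 := by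
              by_contra hcc2
              push_neg at hcc2
              apply hcE
              show coeff d ((if k = k0 E ∧ j ≠ k
                  then monomial (E - B j - B k) (cc j E) else 0)
                - (if j = k0 E ∧ k ≠ j
                  then monomial (E - B j - B k) (cc k E) else 0)) = 0
              rw [coeff_sub, hcc2.1, hcc2.2, sub_zero]
            have h2 : B j ≤ E ∧ B k ≤ E ∧ j ≠ k ∧ wtExp wt w E = μ ∧
                d = E - B j - B k := by
              rcases h3 with h3 | h3
              · split_ifs at h3 with hcond
                · rw [coeff_monomial] at h3
                  split_ifs at h3 with hd2
                  · have hccj : cc j E ≠ 0 := h3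
                    have hjE := hccB j E hccj
                    have hkE : B k ≤ E := by
                      have h5 := hk0 E ⟨j, hccj⟩
                      rw [← hcond.1] at h5
                      exact hccB k E h5
                    exact ⟨hjE, hkE, hcond.2, hccW j E hccj, hd2.symm⟩
                  · exact absurd rfl h3
                · simp at h3
              · split_ifs at h3 with hcond
                · rw [coeff_monomial] at h3
                  split_ifs at h3 with hd2
                  · have hcck : cc k E ≠ 0 := h3
                    have hkE := hccB k E hcck
                    have hjE : B j ≤ E := by
                      have h5 := hk0 E ⟨k, hcck⟩
                      rw [← hcond.1] at h5
                      exact hccB j E h5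
                    exact ⟨hjE, hkE, hcond.2.symm, hccW k E hcck, hd2.symm⟩
                  · exact absurd rfl h3
                · simp at h3
            obtain ⟨hjE, hkE, hjk, hWE, hdE⟩ := h2
            have hjkE := haddle j k E hjk hjE hkE
            subst hdE
            refine ⟨⟨E, hE, rfl⟩, ?_⟩
            rw [tsub_tsub, wtExp_tsub wt w hjkE, wtExp_add, hWE]
            ring
          have hNewW : ∀ j, ∀ d ∈
              (∑ k, H j k * (X (Sum.inl ()) * rename Sum.inr (g k))).support,
              μ + δ ≤ wtExp wt w d + wtExp wt w (B j) := by
            intro j d hd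
            have h1 : ∃ k, coeff d (H j k *
                (X (Sum.inl ()) * rename Sum.inr (g k))) ≠ 0 := by
              by_contra hall
              push_neg at hall
              apply mem_support_iff.1 hd
              rw [coeff_sum]
              exact Finset.sum_eq_zero fun k _ => hall k
            obtain ⟨k, hk⟩ := h1
            obtain ⟨d1, hd1, d2, hd2, hde⟩ := mem_support_mul (mem_support_iff.2 hk)
            obtain ⟨a, ha, rfl⟩ := hsuppXg _ _ hd2
            have h2 := (hHmem j k d1 hd1).2
            have h3 := hδle k a ha
            rw [← hde, wtExp_add, h2]
            linarith
          have hHcard : ∀ j k, (H j k).support.card ≤ EE.card := by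
            intro j k
            have hsub : (H j k).support ⊆ EE.image (fun E => E - B j - B k) := by
              intro d hd
              obtain ⟨⟨E, hE, hdE⟩, -⟩ := hHmem j k d hd
              exact Finset.mem_image.2 ⟨E, hE, hdE.symm⟩
            exact le_trans (Finset.card_le_card hsub) Finset.card_image_le
          have hXgcard : ∀ k,
              (X (Sum.inl ()) * rename Sum.inr (g k)).support.card ≤
                (g k).support.card := by
            intro k
            have hsub : (X (Sum.inl ()) * rename Sum.inr (g k)).support ⊆
                (g k).support.image ea := by
              intro d hd
              obtain ⟨a, ha, rfl⟩ := hsuppXg _ _ hd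
              exact Finset.mem_image.2 ⟨a, ha, rfl⟩
            exact le_trans (Finset.card_le_card hsub) Finset.card_image_le
          have hNewcard : ∀ j,
              (∑ k, H j k * (X (Sum.inl ()) * rename Sum.inr (g k))).support.card ≤
                EE.card * G := by
            intro j
            have hsub : (∑ k, H j k *
                (X (Sum.inl ()) * rename Sum.inr (g k))).support ⊆
                Finset.univ.biUnion (fun k =>
                  (H j k * (X (Sum.inl ()) * rename Sum.inr (g k))).support) := by
              intro d hd
              have h1 : ∃ k, coeff d (H j k *
                  (X (Sum.inl ()) * rename Sum.inr (g k))) ≠ 0 := by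
                by_contra hall
                push_neg at hall
                apply mem_support_iff.1 hd
                rw [coeff_sum]
                exact Finset.sum_eq_zero fun k _ => hall k
              obtain ⟨k, hk⟩ := h1
              exact Finset.mem_biUnion.2 ⟨k, Finset.mem_univ _, mem_support_iff.2 hk⟩
            calc (∑ k, H j k * (X (Sum.inl ()) * rename Sum.inr (g k))).support.card
                ≤ ∑ k, (H j k * (X (Sum.inl ()) * rename Sum.inr (g k))).support.card :=
                  le_trans (Finset.card_le_card hsub) Finset.card_biUnion_le
              _ ≤ ∑ k, EE.card * (g k).support.card := by
                  refine Finset.sum_le_sum fun k _ => ?_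
                  calc (H j k * (X (Sum.inl ()) * rename Sum.inr (g k))).support.card
                      ≤ ((H j k).support + (X (Sum.inl ()) *
                          rename Sum.inr (g k)).support).card :=
                        Finset.card_le_card (MvPolynomial.support_mul _ _)
                    _ ≤ (H j k).support.card * (X (Sum.inl ()) *
                          rename Sum.inr (g k)).support.card := Finset.card_add_le
                    _ ≤ EE.card * (g k).support.card :=
                        Nat.mul_le_mul (hHcard j k) (hXgcard k)
              _ = EE.card * G := by rw [← Finset.mul_sum]
          have hEEcard : EE.card ≤ ∑ j, (p j).support.card := by
            calc EE.card ≤ ∑ j, (p j * monomial (B j) (1:ℂ)).support.card :=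
                Finset.card_biUnion_le
              _ ≤ ∑ j, (p j).support.card := by
                  refine Finset.sum_le_sum fun j _ => ?_
                  have hsub : (p j * monomial (B j) (1:ℂ)).support ⊆
                      (p j).support.image (fun d => d + B j) := by
                    intro E hE
                    have hcc2 : cc j E ≠ 0 := mem_support_iff.1 hE
                    exact Finset.mem_image.2 ⟨E - B j, hccmem j E hcc2,
                      tsub_add_cancel_of_le (hccB j E hcc2)⟩
                  exact le_trans (Finset.card_le_card hsub) Finset.card_image_le
          have hdmp : dm ∈ (p jm).support := by
            show dm ∈ (wpart wt w (μ - wtExp wt w (B jm)) (q jm)).support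
            rw [mem_support_iff, coeff_wpart, if_pos (by linarith [hdmμ] : 
              wtExp wt w dm = μ - wtExp wt w (B jm))]
            exact mem_support_iff.1 hdm
          have hPpos : 1 ≤ ∑ j, (p j).support.card := by
            calc 1 ≤ (p jm).support.card := Finset.card_pos.2 ⟨dm, hdmp⟩
              _ ≤ ∑ j, (p j).support.card :=
                Finset.single_le_sum (f := fun j => (p j).support.card)
                  (fun _ _ => Nat.zero_le _) (Finset.mem_univ jm)
          have hn1 : 1 ≤ κ μ := hκ1 μ hcase
          have hκNew : ∀ lam, μ + δ ≤ lam → κ lam ≤ κ μ - 1 := by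
            intro lam hl
            have := hκ2 μ lam hcase hl
            omega
          have hsplit : Φ q = (∑ j, ∑ d ∈ (q j).support \ (p j).support,
                (K+1) ^ (κ (wtExp wt w d + wtExp wt w (B j))))
              + ∑ j, ∑ d ∈ (p j).support,
                (K+1) ^ (κ (wtExp wt w d + wtExp wt w (B j))) := by
            rw [← Finset.sum_add_distrib]
            refine Finset.sum_congr rfl fun j _ => ?_
            exact (Finset.sum_sdiff (fun d hd => (hpsupp j d hd).2)).symm
          have hbound1 : Φ q' ≤ (∑ j, ∑ d ∈ (q j).support \ (p j).support,
                (K+1) ^ (κ (wtExp wt w d + wtExp wt w (B j))))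
              + ∑ j, ∑ d ∈ (∑ k, H j k *
                  (X (Sum.inl ()) * rename Sum.inr (g k))).support,
                (K+1) ^ (κ (wtExp wt w d + wtExp wt w (B j))) := by
            rw [← Finset.sum_add_distrib]
            refine Finset.sum_le_sum fun j _ => ?_
            calc ∑ d ∈ (q' j).support, (K+1) ^ (κ (wtExp wt w d + wtExp wt w (B j)))
                ≤ ∑ d ∈ ((q j).support \ (p j).support) ∪ (∑ k, H j k *
                    (X (Sum.inl ()) * rename Sum.inr (g k))).support,
                    (K+1) ^ (κ (wtExp wt w d + wtExp wt w (B j))) :=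
                  Finset.sum_le_sum_of_subset (hsuppq' j)
              _ ≤ _ := by
                  rw [← Finset.sum_union_inter]
                  exact Nat.le_add_right _ _
          have hlast : (∑ j, ∑ d ∈ (∑ k, H j k *
                  (X (Sum.inl ()) * rename Sum.inr (g k))).support,
                (K+1) ^ (κ (wtExp wt w d + wtExp wt w (B j))))
              < ∑ j, ∑ d ∈ (p j).support,
                (K+1) ^ (κ (wtExp wt w d + wtExp wt w (B j))) := by
            have hR : ∀ j : Fin c, ∑ d ∈ (p j).support,
                (K+1) ^ (κ (wtExp wt w d + wtExp wt w (B j))) =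
                (p j).support.card * (K+1) ^ (κ μ) := by
              intro j
              rw [Finset.sum_congr rfl (fun d hd => by
                rw [(by linarith [(hpsupp j d hd).1] :
                  wtExp wt w d + wtExp wt w (B j) = μ)]), Finset.sum_const,
                smul_eq_mul]
            have hL : ∀ j : Fin c, ∑ d ∈ (∑ k, H j k *
                  (X (Sum.inl ()) * rename Sum.inr (g k))).support,
                (K+1) ^ (κ (wtExp wt w d + wtExp wt w (B j))) ≤
                (∑ k, H j k * (X (Sum.inl ()) *
                  rename Sum.inr (g k))).support.card * (K+1) ^ (κ μ - 1) := by
              intro j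
              calc ∑ d ∈ (∑ k, H j k *
                    (X (Sum.inl ()) * rename Sum.inr (g k))).support,
                  (K+1) ^ (κ (wtExp wt w d + wtExp wt w (B j)))
                  ≤ ∑ _d ∈ (∑ k, H j k *
                      (X (Sum.inl ()) * rename Sum.inr (g k))).support,
                    (K+1) ^ (κ μ - 1) := by
                    refine Finset.sum_le_sum fun d hd => ?_
                    exact Nat.pow_le_pow_right (Nat.succ_pos K)
                      (hκNew _ (hNewW j d hd))
                _ = _ := by rw [Finset.sum_const, smul_eq_mul]
            set P : ℕ := ∑ j, (p j).support.card with hPdef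
            have hpow : (K+1) ^ (κ μ) = (K+1) ^ (κ μ - 1) * (K+1) := by
              conv_lhs => rw [(by omega : κ μ = (κ μ - 1) + 1)]
              rw [pow_succ]
            have hX : 0 < P * (K+1) ^ (κ μ - 1) :=
              Nat.mul_pos hPpos (pow_pos (Nat.succ_pos K) _)
            calc (∑ j, ∑ d ∈ (∑ k, H j k *
                    (X (Sum.inl ()) * rename Sum.inr (g k))).support,
                  (K+1) ^ (κ (wtExp wt w d + wtExp wt w (B j))))
                ≤ ∑ j : Fin c, (∑ k, H j k * (X (Sum.inl ()) *
                    rename Sum.inr (g k))).support.card * (K+1) ^ (κ μ - 1) :=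
                  Finset.sum_le_sum fun j _ => hL j
              _ ≤ ∑ _j : Fin c, (EE.card * G) * (K+1) ^ (κ μ - 1) :=
                  Finset.sum_le_sum fun j _ =>
                    Nat.mul_le_mul_right _ (hNewcard j)
              _ = c * ((EE.card * G) * (K+1) ^ (κ μ - 1)) := by
                  rw [Finset.sum_const, Finset.card_univ, Fintype.card_fin,
                    smul_eq_mul]
              _ ≤ K * (P * (K+1) ^ (κ μ - 1)) := by
                  have h9 : c * (EE.card * G) ≤ K * P := by
                    calc c * (EE.card * G) = (c * G) * EE.card := by ring
                      _ ≤ (c * G) * P := Nat.mul_le_mul_left _ hEEcard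
                      _ = K * P := by rw [hKdef]
                  calc c * ((EE.card * G) * (K+1) ^ (κ μ - 1))
                      = (c * (EE.card * G)) * (K+1) ^ (κ μ - 1) := by ring
                    _ ≤ (K * P) * (K+1) ^ (κ μ - 1) :=
                        Nat.mul_le_mul_right _ h9
                    _ = K * (P * (K+1) ^ (κ μ - 1)) := by ring
              _ < (K+1) * (P * (K+1) ^ (κ μ - 1)) :=
                  mul_lt_mul_of_pos_right (Nat.lt_succ_self K) hX
              _ = P * (K+1) ^ (κ μ) := by rw [hpow]; ring
              _ = ∑ j, ∑ d ∈ (p j).support,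
                  (K+1) ^ (κ (wtExp wt w d + wtExp wt w (B j))) := by
                  rw [hPdef, Finset.sum_mul]
                  exact Finset.sum_congr rfl fun j _ => (hR j).symm
          have hΦq' : Φ q' < Φ q := by
            calc Φ q' ≤ _ := hbound1
              _ < _ := by exact Nat.add_lt_add_left hlast _
              _ = Φ q := hsplit.symm
          exact ih q' hrep' (by omega)
    · rw [Ideal.span_le]
      rintro q ⟨j, rfl⟩
      rw [SetLike.mem_coe]
      show monomial (B j) (1 : ℂ) ∈ initialIdeal wt w I
      rw [← hinitF j]
      exact Ideal.subset_span
        ⟨F j, by rw [hI]; exact Ideal.subset_span ⟨j, rfl⟩, hFne j, rfl⟩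
  · intro hID j a ha
    by_contra hlt
    push_neg at hlt
    have hFj : F j ∈ I := by
      rw [hI]
      exact Ideal.subset_span ⟨j, rfl⟩
    have hsne : (F j).support.Nonempty :=
      ⟨B j, mem_support_iff.2 (by rw [hcoeffBF]; norm_num)⟩
    obtain ⟨e0, he0s, he0min⟩ := Finset.exists_min_image (F j).support (wtExp wt w) hsne
    have he0init : e0 ∈ (initialForm wt w (F j)).support :=
      (mem_support_initialForm wt w _ _).2 ⟨he0s, he0min⟩
    have heaa : ea a ∈ (F j).support := by
      rw [mem_support_iff, hF]
      simp only [coeff_add]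
      rw [hcoeffXg, coeff_monomial, if_neg, zero_add]
      · exact mem_support_iff.1 ha
      · intro hc
        have : (0 : ℕ) = 1 := by rw [← hBapp_inl j, hc, hea_inl]
        simp at this
    have hlt2 : wtExp wt w e0 < wtExp wt w (B j) := by
      calc wtExp wt w e0 ≤ wtExp wt w (ea a) := he0min _ heaa
      _ < wtExp wt w (B j) := by rw [hWea, hWB]; exact hlt
    rcases hsuppF j e0 he0s with h | ⟨a', ha', rfl⟩
    · rw [h] at hlt2; exact lt_irrefl _ hlt2
    have hinit : initialForm wt w (F j) ∈
        Ideal.span (Set.range fun j => monomial (B j) (1 : ℂ)) := by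
      rw [← hID]
      exact Ideal.subset_span ⟨F j, hFj, hFne j, rfl⟩
    obtain ⟨k, hk⟩ := (hmemB _).1 hinit _ he0init
    have hbk : b k ≤ a' := by
      rw [Finsupp.le_def]
      intro i
      have := (Finsupp.le_def.1 hk) (Sum.inr i)
      rwa [hBapp_inr, hea_inr] at this
    apply hg j a' ha'
    rw [hI₀, hmemb]
    intro e he
    rw [support_monomial, if_neg one_ne_zero, Finset.mem_singleton] at he
    subst he
    exact ⟨k, hbk⟩

end
end

section
/- Let v₁,…,v_N ∈ ℤⁿ be vectors whose nonnegative real span equals all of ℝⁿ (i.e., every element of ℝⁿ is a nonnegative real linear combination of v₁,…,v_N). Then for every w ∈ ℤ^N the set {a ∈ ℕ^N : there exists u ∈ ℤⁿ with a_i = w_i + ⟨u, v_i⟩ for all i = 1,…,N} is finite. -/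
private lemma cox_aux_lb {n N : ℕ} (v : Fin N → Fin n → ℤ) (w : Fin N → ℤ)
    (e : Fin n → ℝ) (c : Fin N → ℝ) (hc : ∀ i, 0 ≤ c i)
    (hce : e = ∑ i, c i • (fun j => (v i j : ℝ)))
    (u : Fin n → ℤ) (hu : ∀ i, 0 ≤ w i + ∑ k, u k * v i k) :
    -(∑ i, c i * |(w i : ℝ)|) ≤ ∑ k, (u k : ℝ) * e k := by
  have he : ∀ k, e k = ∑ i, c i * (v i k : ℝ) := by
    intro k; rw [hce]; simp [Finset.sum_apply]
  have h1 : ∑ k, (u k : ℝ) * e k = ∑ i, c i * ∑ k, (u k : ℝ) * (v i k : ℝ) := by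
    simp_rw [he, Finset.mul_sum]
    rw [Finset.sum_comm]
    exact Finset.sum_congr rfl fun i _ => Finset.sum_congr rfl fun k _ => by ring
  rw [h1, ← Finset.sum_neg_distrib]
  apply Finset.sum_le_sum
  intro i _
  have hS : (-(w i) : ℝ) ≤ ∑ k, (u k : ℝ) * (v i k : ℝ) := by
    have := hu i
    have : (0 : ℝ) ≤ (w i : ℝ) + ∑ k, (u k : ℝ) * (v i k : ℝ) := by
      exact_mod_cast this
    linarith
  have h2 : -(c i * |(w i : ℝ)|) ≤ c i * (-(w i) : ℝ) := by
    rw [← mul_neg]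
    exact mul_le_mul_of_nonneg_left (neg_le_neg (le_abs_self _)) (hc i)
  calc -(c i * |(w i : ℝ)|) ≤ c i * (-(w i) : ℝ) := h2
    _ ≤ c i * ∑ k, (u k : ℝ) * (v i k : ℝ) :=
        mul_le_mul_of_nonneg_left hS (hc i)

/-- If the vectors `v₁, …, v_N ∈ ℤⁿ` positively span `ℝⁿ` (as the ray
generators of a complete fan do), then for every `w ∈ ℤ^N` there are only
finitely many `a ∈ ℕ^N` of the form `a i = w i + ⟨u, v i⟩` for some `u ∈ ℤⁿ`;
i.e., each graded piece of the Cox ring is finite-dimensional. -/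
theorem finite_monomials_of_fixed_degree {n N : ℕ} (v : Fin N → Fin n → ℤ)
    (hspan : ∀ x : Fin n → ℝ, ∃ c : Fin N → ℝ, (∀ i, 0 ≤ c i) ∧
      x = ∑ i, c i • (fun j => (v i j : ℝ)))
    (w : Fin N → ℤ) :
    {a : Fin N → ℕ | ∃ u : Fin n → ℤ,
      ∀ i, (a i : ℤ) = w i + ∑ j, u j * v i j}.Finite := by
  classical
  set U : Set (Fin n → ℤ) := {u | ∀ i, 0 ≤ w i + ∑ k, u k * v i k} with hU
  -- each coordinate of u ∈ U is bounded
  have key : ∀ j : Fin n, ∃ B : ℤ, ∀ u ∈ U, u j ∈ Finset.Icc (-B) B := by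
    intro j
    obtain ⟨c, hc, hcx⟩ := hspan (fun k => if k = j then 1 else 0)
    obtain ⟨d, hd, hdx⟩ := hspan (fun k => if k = j then -1 else 0)
    set C : ℝ := ∑ i, c i * |(w i : ℝ)| with hC
    set D : ℝ := ∑ i, d i * |(w i : ℝ)| with hD
    refine ⟨⌈max C D⌉, ?_⟩
    intro u hu
    have h1 := cox_aux_lb v w _ c hc hcx u hu
    have h2 := cox_aux_lb v w _ d hd hdx u hu
    have e1 : ∑ k, (u k : ℝ) * (if k = j then 1 else 0) = (u j : ℝ) := by
      simp
    have e2 : ∑ k, (u k : ℝ) * (if k = j then (-1 : ℝ) else 0) = -(u j : ℝ) := by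
      simp
    rw [e1] at h1
    rw [e2] at h2
    have hub : (u j : ℝ) ≤ max C D := by
      have : (u j : ℝ) ≤ D := by linarith
      exact this.trans (le_max_right _ _)
    have hlb : -(max C D) ≤ (u j : ℝ) := by
      have : -C ≤ (u j : ℝ) := h1
      have h3 : -(max C D) ≤ -C := neg_le_neg (le_max_left _ _)
      linarith
    rw [Finset.mem_Icc]
    constructor
    · have : (-(⌈max C D⌉ : ℤ) : ℝ) ≤ (u j : ℝ) := by
        push_cast
        have := Int.le_ceil (max C D)
        linarith
      exact_mod_cast this
    · have : (u j : ℝ) ≤ ((⌈max C D⌉ : ℤ) : ℝ) := hub.trans (Int.le_ceil _)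
      exact_mod_cast this
  choose B hB using key
  have hUfin : U.Finite := by
    apply Set.Finite.subset
      (Set.Finite.pi (fun j => (Finset.Icc (-(B j)) (B j)).finite_toSet))
    intro u hu
    intro j _
    exact hB j u hu
  have himg : {a : Fin N → ℕ | ∃ u : Fin n → ℤ,
      ∀ i, (a i : ℤ) = w i + ∑ j, u j * v i j}
      ⊆ (fun u : Fin n → ℤ => fun i => (w i + ∑ k, u k * v i k).toNat) '' U := by
    rintro a ⟨u, hu⟩
    refine ⟨u, ?_, ?_⟩
    · intro i
      rw [← hu i]
      exact Int.ofNat_nonneg (a i)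
    · funext i
      show (w i + ∑ k, u k * v i k).toNat = a i
      rw [← hu i, Int.toNat_natCast]
  exact (hUfin.image _).subset himg
end

section
/- Let v₁,…,v_N ∈ ℤⁿ be vectors whose nonnegative real span equals all of ℝⁿ, let Λ = {(⟨u, v₁⟩,…,⟨u, v_N⟩) : u ∈ ℤⁿ} ⊆ ℤ^N, and grade S = ℂ[x₁,…,x_N] by ℤ^N/Λ, assigning to the monomial x^a the class of a. Let I₀ ⊆ S be a monomial ideal. Then the ℂ-vector space of degree-preserving S-module homomorphisms φ : I₀ → S/I₀ — i.e., those φ such that for every monomial x^b ∈ I₀ the element φ(x^b) is a ℂ-linear combination of residue classes of monomials x^{b'} with b' − b ∈ Λ — is finite-dimensional. -/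
open MvPolynomial

lemma int_sol_finite {n N : ℕ} (v : Fin N → Fin n → ℤ)
    (hspan : ∀ x : Fin n → ℝ, ∃ c : Fin N → ℝ, (∀ i, 0 ≤ c i) ∧
      x = ∑ i, c i • (fun j => (v i j : ℝ)))
    (b : Fin N →₀ ℕ) :
    {u : Fin n → ℤ | ∀ i, -(b i : ℤ) ≤ ∑ j, u j * v i j}.Finite := by
  classical
  have key : ∀ x : Fin n → ℝ, ∃ M : ℝ, ∀ u : Fin n → ℤ,
      (∀ i, -(b i : ℤ) ≤ ∑ j, u j * v i j) → -M ≤ ∑ k, (u k : ℝ) * x k := by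
    intro x
    obtain ⟨c, hc0, hcx⟩ := hspan x
    refine ⟨∑ i, c i * (b i : ℝ), fun u hu => ?_⟩
    have hx : ∀ k, x k = ∑ i, c i * (v i k : ℝ) := by
      intro k; rw [hcx]; simp [Finset.sum_apply]
    have h1 : ∑ k, (u k : ℝ) * x k = ∑ i, c i * (∑ k, (u k : ℝ) * (v i k : ℝ)) := by
      simp only [hx, Finset.mul_sum]
      rw [Finset.sum_comm]
      congr 1; ext i; congr 1; ext k; ring
    rw [h1, ← Finset.sum_neg_distrib]
    apply Finset.sum_le_sum
    intro i _
    have hui : (-(b i : ℝ)) ≤ ∑ k, (u k : ℝ) * (v i k : ℝ) := by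
      have := hu i
      have : (-(b i : ℤ) : ℝ) ≤ ((∑ j, u j * v i j : ℤ) : ℝ) := by exact_mod_cast this
      push_cast at this
      simpa using this
    calc -(c i * (b i : ℝ)) = c i * (-(b i : ℝ)) := by ring
      _ ≤ c i * (∑ k, (u k : ℝ) * (v i k : ℝ)) := by
          exact mul_le_mul_of_nonneg_left hui (hc0 i)
  choose Mp hMp using fun j => key (Pi.single j (1:ℝ))
  choose Mm hMm using fun j => key (-(Pi.single j (1:ℝ)))
  apply Set.Finite.subset
    (Set.Finite.pi (t := fun j => Set.Icc (⌈-(Mp j)⌉) (⌊Mm j⌋))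
      (fun j => Set.finite_Icc _ _))
  intro u hu
  intro j _
  have hsingle : ∑ k, (u k : ℝ) * (Pi.single j (1:ℝ) : Fin n → ℝ) k = (u j : ℝ) := by
    rw [Finset.sum_eq_single j]
    · simp
    · intro k _ hk; simp [Pi.single_apply, hk]
    · simp
  constructor
  · rw [Int.ceil_le]
    have := hMp j u hu
    rw [hsingle] at this
    linarith
  · rw [Int.le_floor]
    have := hMm j u hu
    have h2 : ∑ k, (u k : ℝ) * (-(Pi.single j (1:ℝ)) : Fin n → ℝ) k = -(u j : ℝ) := by
      simp only [Pi.neg_apply, mul_neg]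
      rw [Finset.sum_neg_distrib, hsingle]
    rw [h2] at this
    linarith

lemma bprime_finite {n N : ℕ} (v : Fin N → Fin n → ℤ)
    (hspan : ∀ x : Fin n → ℝ, ∃ c : Fin N → ℝ, (∀ i, 0 ≤ c i) ∧
      x = ∑ i, c i • (fun j => (v i j : ℝ)))
    (b : Fin N →₀ ℕ) :
    {b' : Fin N →₀ ℕ | ∃ u : Fin n → ℤ,
      ∀ i, (b' i : ℤ) - (b i : ℤ) = ∑ j, u j * v i j}.Finite := by
  classical
  have hU := int_sol_finite v hspan b
  apply Set.Finite.subset (hU.image (fun u =>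
    Finsupp.equivFunOnFinite.symm (fun i => ((b i : ℤ) + ∑ j, u j * v i j).toNat)))
  rintro b' ⟨u, hu⟩
  refine ⟨u, ?_, ?_⟩
  · intro i
    have := hu i
    have h0 : (0 : ℤ) ≤ (b' i : ℤ) := Int.natCast_nonneg _
    linarith
  · apply Finsupp.ext
    intro i
    have := hu i
    have heq : ((b i : ℤ) + ∑ j, u j * v i j) = (b' i : ℤ) := by linarith
    simp [Finsupp.equivFunOnFinite, heq]
set_option maxHeartbeats 1600000 in
/-- Finite-dimensionality of the space `Hom(I₀, S/I₀)₀` of degree-preserving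
module homomorphisms, for a monomial ideal `I₀` in the Cox ring
`S = ℂ[x₁,…,x_N]` graded by `ℤ^N/Λ`, where
`Λ = {(⟨u,v₁⟩,…,⟨u,v_N⟩) : u ∈ ℤⁿ}` and the `v i` positively span `ℝⁿ`:
there is a finite set of degree-preserving homomorphisms spanning (over `ℂ`)
all degree-preserving homomorphisms. -/
theorem hom_degree_zero_finite_dimensional {n N : ℕ} (v : Fin N → Fin n → ℤ)
    (hspan : ∀ x : Fin n → ℝ, ∃ c : Fin N → ℝ, (∀ i, 0 ≤ c i) ∧
      x = ∑ i, c i • (fun j => (v i j : ℝ)))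
    (I₀ : Ideal (MvPolynomial (Fin N) ℂ))
    (hI₀monomial : ∃ T : Set (Fin N →₀ ℕ),
      I₀ = Ideal.span ((fun b => monomial b (1 : ℂ)) '' T))
    -- the degree-preserving condition on a module homomorphism `φ : I₀ → S/I₀`
    (DegZero : (↥I₀ →ₗ[MvPolynomial (Fin N) ℂ]
      (MvPolynomial (Fin N) ℂ ⧸ I₀)) → Prop)
    (hDegZero : ∀ φ, DegZero φ ↔
      ∀ (b : Fin N →₀ ℕ) (hb : monomial b (1 : ℂ) ∈ I₀),
        φ ⟨monomial b (1 : ℂ), hb⟩ ∈ Submodule.span ℂ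
          {q : MvPolynomial (Fin N) ℂ ⧸ I₀ | ∃ b' : Fin N →₀ ℕ,
            (∃ u : Fin n → ℤ, ∀ i, (b' i : ℤ) - (b i : ℤ) = ∑ j, u j * v i j) ∧
            q = Ideal.Quotient.mk I₀ (monomial b' (1 : ℂ))}) :
    ∃ s : Finset (↥I₀ →ₗ[MvPolynomial (Fin N) ℂ]
        (MvPolynomial (Fin N) ℂ ⧸ I₀)),
      (∀ φ ∈ s, DegZero φ) ∧
      ∀ φ, DegZero φ → φ ∈ Submodule.span ℂ (s : Set _) := by
  classical
  obtain ⟨T, hT⟩ := hI₀monomial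
  -- every monomial in the support of an element of I₀ lies in I₀
  have hmono : ∀ p : MvPolynomial (Fin N) ℂ, p ∈ I₀ →
      ∀ m ∈ p.support, monomial m (1 : ℂ) ∈ I₀ := by
    intro p hp m hm
    rw [hT, mem_ideal_span_monomial_image] at hp ⊢
    intro xi hxi
    have hxm : xi = m := by
      simpa [support_monomial] using hxi
    exact hxm ▸ hp m hm
  -- the degree-zero target sets
  set A : (Fin N →₀ ℕ) → Set (MvPolynomial (Fin N) ℂ ⧸ I₀) :=
    fun b => {q : MvPolynomial (Fin N) ℂ ⧸ I₀ | ∃ b' : Fin N →₀ ℕ,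
      (∃ u : Fin n → ℤ, ∀ i, (b' i : ℤ) - (b i : ℤ) = ∑ j, u j * v i j) ∧
      q = Ideal.Quotient.mk I₀ (monomial b' (1 : ℂ))} with hA
  have hAfin : ∀ b, (A b).Finite := by
    intro b
    apply Set.Finite.subset ((bprime_finite v hspan b).image
      (fun b' => Ideal.Quotient.mk I₀ (monomial b' (1 : ℂ))))
    rintro q ⟨b', hb', rfl⟩
    exact ⟨b', hb', rfl⟩
  -- evaluation at a point of I₀, as a ℂ-linear map
  let evalAt : ↥I₀ → ((↥I₀ →ₗ[MvPolynomial (Fin N) ℂ]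
      (MvPolynomial (Fin N) ℂ ⧸ I₀)) →ₗ[ℂ] (MvPolynomial (Fin N) ℂ ⧸ I₀)) :=
    fun x => { toFun := fun φ => φ x,
               map_add' := fun _ _ => rfl,
               map_smul' := fun _ _ => rfl }
  -- the submodule of degree-zero homomorphisms
  set W : Submodule ℂ (↥I₀ →ₗ[MvPolynomial (Fin N) ℂ]
      (MvPolynomial (Fin N) ℂ ⧸ I₀)) :=
    ⨅ (b : Fin N →₀ ℕ) (hb : monomial b (1 : ℂ) ∈ I₀),
      (Submodule.span ℂ (A b)).comap (evalAt ⟨monomial b (1 : ℂ), hb⟩) with hW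
  have hWmem : ∀ φ, φ ∈ W ↔ DegZero φ := by
    intro φ
    rw [hDegZero]
    simp only [hW, Submodule.mem_iInf, Submodule.mem_comap]
    rfl
  -- finite generating set of I₀
  obtain ⟨G, hG⟩ := IsNoetherian.noetherian I₀
  have hGsub : (G : Set (MvPolynomial (Fin N) ℂ)) ⊆ I₀ := by
    intro x hx; rw [← hG]; exact Submodule.subset_span hx
  -- generators inside the subtype
  set G' : Set ↥I₀ := {x : ↥I₀ | (x : MvPolynomial (Fin N) ℂ) ∈ G} with hG'
  have hG'span : Submodule.span (MvPolynomial (Fin N) ℂ) G' = ⊤ := by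
    apply Submodule.map_injective_of_injective I₀.injective_subtype
    rw [Submodule.map_subtype_top, ← Submodule.span_image]
    have himg : I₀.subtype '' G' = (G : Set (MvPolynomial (Fin N) ℂ)) := by
      ext y
      constructor
      · rintro ⟨x, hx, rfl⟩; exact hx
      · intro hy; exact ⟨⟨y, hGsub hy⟩, hy, rfl⟩
    rw [himg, hG]
  -- evaluation on generators, as a ℂ-linear map into a finite product
  let ι := {p : MvPolynomial (Fin N) ℂ // p ∈ G}
  let E : (↥I₀ →ₗ[MvPolynomial (Fin N) ℂ] (MvPolynomial (Fin N) ℂ ⧸ I₀)) →ₗ[ℂ]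
      (ι → (MvPolynomial (Fin N) ℂ ⧸ I₀)) :=
    { toFun := fun φ => fun g => φ ⟨g.1, hGsub g.2⟩,
      map_add' := fun _ _ => rfl,
      map_smul' := fun _ _ => rfl }
  have hEinj : Function.Injective E := by
    intro φ ψ h
    apply LinearMap.ext_on hG'span
    intro x hx
    have := congrFun h ⟨(x : MvPolynomial (Fin N) ℂ), hx⟩
    simpa [E, Subtype.ext_iff] using this
  -- the constraining finite-dimensional submodules
  let Q : ι → Submodule ℂ (MvPolynomial (Fin N) ℂ ⧸ I₀) :=
    fun g => Submodule.span ℂ (⋃ m ∈ (g.1).support, A m)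
  have hQfd : ∀ g, FiniteDimensional ℂ (Q g) := by
    intro g
    apply FiniteDimensional.span_of_finite
    exact Set.Finite.biUnion (Finset.finite_toSet _) (fun m _ => hAfin m)
  -- values of degree-zero homs on generators land in Q
  have hval : ∀ φ ∈ W, ∀ g : ι, E φ g ∈ Q g := by
    intro φ hφ g
    have hg : (g.1 : MvPolynomial (Fin N) ℂ) ∈ I₀ := hGsub g.2
    have hrepr : (⟨g.1, hg⟩ : ↥I₀) = ∑ m ∈ (g.1).support.attach,
        (C (coeff m.1 g.1) : MvPolynomial (Fin N) ℂ) •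
          (⟨monomial m.1 (1 : ℂ), hmono g.1 hg m.1 m.2⟩ : ↥I₀) := by
      apply Subtype.ext
      push_cast [Submodule.coe_sum]
      simp only [smul_eq_mul, C_mul_monomial, mul_one]
      rw [Finset.sum_attach (g.1).support (fun m => monomial m (coeff m g.1))]
      exact (support_sum_monomial_coeff g.1).symm
    have hEg : E φ g = φ ⟨g.1, hg⟩ := rfl
    rw [hEg, hrepr, map_sum]
    apply Submodule.sum_mem
    intro m _
    rw [map_smul, ← MvPolynomial.algebraMap_eq, algebraMap_smul]
    apply Submodule.smul_mem
    have hφm : φ ⟨monomial m.1 (1 : ℂ), hmono g.1 hg m.1 m.2⟩ ∈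
        Submodule.span ℂ (A m.1) := by
      have := hWmem φ |>.mp hφ
      rw [hDegZero] at this
      exact this m.1 (hmono g.1 hg m.1 m.2)
    refine Submodule.span_mono ?_ hφm
    exact Set.subset_biUnion_of_mem m.2
  -- W is finite dimensional
  haveI : ∀ g, FiniteDimensional ℂ (Q g) := hQfd
  let J : (∀ g : ι, ↥(Q g)) →ₗ[ℂ] (ι → (MvPolynomial (Fin N) ℂ ⧸ I₀)) :=
    LinearMap.pi (fun g => (Q g).subtype ∘ₗ LinearMap.proj g)
  have hmaple : Submodule.map E W ≤ LinearMap.range J := by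
    rintro x ⟨φ, hφ, rfl⟩
    exact ⟨fun g => ⟨E φ g, hval φ hφ g⟩, rfl⟩
  haveI : FiniteDimensional ℂ (LinearMap.range J) := inferInstance
  haveI hfd : FiniteDimensional ℂ (Submodule.map E W) :=
    Submodule.finiteDimensional_of_le hmaple
  haveI : FiniteDimensional ℂ W :=
    (Submodule.equivMapOfInjective E hEinj W).symm.finiteDimensional
  -- extract a finite spanning set
  obtain ⟨t, ht⟩ := Module.Finite.fg_top (R := ℂ) (M := ↥W)
  refine ⟨t.image Subtype.val, ?_, ?_⟩
  · intro φ hφ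
    rw [Finset.mem_image] at hφ
    obtain ⟨x, _, rfl⟩ := hφ
    exact (hWmem _).mp x.prop
  · intro φ hφ
    have hφW : φ ∈ W := (hWmem φ).mpr hφ
    have : Submodule.span ℂ ((t.image Subtype.val : Finset _) : Set _) = W := by
      rw [Finset.coe_image,
        show (Subtype.val '' (↑t : Set ↥W)) = ⇑W.subtype '' ↑t from rfl,
        Submodule.span_image, ht, Submodule.map_subtype_top]
    rw [this]
    exact hφW
end

section
/- Let Δ₁,…,Δ_c and ∇₁,…,∇_c be lattice polytopes in ℝⁿ (convex hulls of finitely many points of ℤⁿ), each containing the origin, such that: (a) ⟨x, y⟩ ≥ −δ_{ij} for all x ∈ Δ_i, y ∈ ∇_j; (b) the Minkowski sums Δ := Δ₁ + ⋯ + Δ_c and ∇ := ∇₁ + ⋯ + ∇_c are reflexive, i.e., contain 0 in their interiors and their polar duals Δ* = {y : ⟨x, y⟩ ≥ −1 ∀ x ∈ Δ} and ∇* are again lattice polytopes; (c) Δ* = conv(∇₁ ∪ … ∪ ∇_c) and ∇* = conv(Δ₁ ∪ … ∪ Δ_c). For a nonempty proper face F of ∇ (a face means an exposed face: the set of points where some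 linear functional attains its minimum) let F^∨ := {x ∈ ∇* : ⟨x, y⟩ = −1 for all y ∈ F}, the dual face of ∇*, and define dual faces of faces of Δ analogously using Δ*. Then the assignment F ↦ (F^∨ ∩ Δ₁) + ⋯ + (F^∨ ∩ Δ_c) (Minkowski sum) sends every nonempty proper face F of ∇ such that F^∨ ∩ Δ_i contains a nonzero point for each i = 1,…,c to a nonempty proper face G of Δ such that G^∨ ∩ ∇_j contains a nonzero point for each j = 1,…,c, and it is an inclusion-reversing bijection between these two sets of faces. -/
/-- A lattice polytope in `ℝⁿ`: the convex hull of finitely many points of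
`ℤⁿ`. -/
def IsLatticePolytope {n : ℕ} (Q : Set (Fin n → ℝ)) : Prop :=
  ∃ s : Finset (Fin n → ℤ),
    Q = convexHull ℝ ((fun z : Fin n → ℤ => fun i => (z i : ℝ)) '' ↑s)

/-- The polar dual `Q* = {x : ⟨x, y⟩ ≥ -1 for all y ∈ Q}` of `Q ⊆ ℝⁿ`. -/
def polarDual {n : ℕ} (Q : Set (Fin n → ℝ)) : Set (Fin n → ℝ) :=
  {x | ∀ y ∈ Q, -1 ≤ ∑ k, x k * y k}

/-- The Minkowski sum of the sets `A 0, …, A (c-1)` in `ℝⁿ`. -/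
def minkowskiSum {n c : ℕ} (A : Fin c → Set (Fin n → ℝ)) : Set (Fin n → ℝ) :=
  {y | ∃ z : Fin c → Fin n → ℝ, (∀ j, z j ∈ A j) ∧ y = ∑ j, z j}

/-- `F` is a face of `P`: either `F = P` or `F` is an exposed face, i.e. the
set of points of `P` at which some linear functional attains its minimum on
`P`. -/
def IsFaceOf {n : ℕ} (P F : Set (Fin n → ℝ)) : Prop :=
  F = P ∨ ∃ ℓ : (Fin n → ℝ) →ₗ[ℝ] ℝ, F = {x ∈ P | ∀ y ∈ P, ℓ x ≤ ℓ y}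

/-- The dual face `F^∨ = {x ∈ Q* : ⟨x, y⟩ = -1 for all y ∈ F}` in the polar
dual of `Q` of a face `F` of `Q`. -/
def dualFace {n : ℕ} (Q F : Set (Fin n → ℝ)) : Set (Fin n → ℝ) :=
  {x ∈ polarDual Q | ∀ y ∈ F, ∑ k, x k * y k = -1}

open scoped Pointwise

namespace MirrorAux


variable {n c : ℕ}

def dotL (v : Fin n → ℝ) : (Fin n → ℝ) →ₗ[ℝ] ℝ where
  toFun x := ∑ k, x k * v k
  map_add' x y := by simp [add_mul, Finset.sum_add_distrib]
  map_smul' r x := by simp [Finset.mul_sum, mul_assoc]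

def dotR (x : Fin n → ℝ) : (Fin n → ℝ) →ₗ[ℝ] ℝ where
  toFun y := ∑ k, x k * y k
  map_add' a b := by simp [mul_add, Finset.sum_add_distrib]
  map_smul' r a := by simp [Finset.mul_sum, mul_left_comm]

lemma dot_comm (x y : Fin n → ℝ) : ∑ k, x k * y k = ∑ k, y k * x k :=
  Finset.sum_congr rfl fun k _ => mul_comm _ _

lemma dot_sum_left (z : Fin c → Fin n → ℝ) (y : Fin n → ℝ) :
    ∑ k, (∑ j, z j) k * y k = ∑ j, ∑ k, (z j) k * y k := by
  rw [Finset.sum_comm]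
  exact Finset.sum_congr rfl fun k _ => by simp [Finset.sum_apply, Finset.sum_mul]

lemma dot_sum_right (x : Fin n → ℝ) (z : Fin c → Fin n → ℝ) :
    ∑ k, x k * (∑ j, z j) k = ∑ j, ∑ k, x k * (z j) k := by
  rw [Finset.sum_comm]
  exact Finset.sum_congr rfl fun k _ => by simp [Finset.sum_apply, Finset.mul_sum]

lemma squeeze_sum {v b : Fin c → ℝ} (hle : ∀ i, b i ≤ v i)
    (hsum : ∑ i, v i = ∑ i, b i) : ∀ i, v i = b i := fun i =>
  ((Finset.sum_eq_sum_iff_of_le (fun i _ => hle i)).mp hsum.symm i (Finset.mem_univ i)).symm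

lemma delta_sum_right (i : Fin c) : ∑ j, -(if i = j then (1:ℝ) else 0) = -1 := by simp

lemma delta_sum_left (j : Fin c) : ∑ i, -(if i = j then (1:ℝ) else 0) = -1 := by simp

lemma minkowskiSum_eq (A : Fin c → Set (Fin n → ℝ)) : minkowskiSum A = ∑ j, A j := by
  ext x
  rw [Set.mem_fintype_sum]
  constructor
  · rintro ⟨z, hz, rfl⟩; exact ⟨z, hz, rfl⟩
  · rintro ⟨g, hg, rfl⟩; exact ⟨g, hg, rfl⟩

lemma minkowskiSum_hull (A : Fin c → Set (Fin n → ℝ)) (S : Fin c → Finset (Fin n → ℝ))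
    (hA : ∀ j, A j = convexHull ℝ (S j : Set (Fin n → ℝ))) :
    ∃ T : Finset (Fin n → ℝ), minkowskiSum A = convexHull ℝ (T : Set (Fin n → ℝ)) := by
  classical
  refine ⟨(Fintype.piFinset S).image (fun z => ∑ j, z j), ?_⟩
  have himg : (((Fintype.piFinset S).image (fun z => ∑ j, z j) : Finset (Fin n → ℝ)) :
      Set (Fin n → ℝ)) = ∑ j, (S j : Set (Fin n → ℝ)) := by
    ext x
    rw [Set.mem_fintype_sum]
    simp only [Finset.coe_image, Set.mem_image, Finset.mem_coe, Fintype.mem_piFinset]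
    constructor
    · rintro ⟨z, hz, rfl⟩; exact ⟨z, hz, rfl⟩
    · rintro ⟨g, hg, rfl⟩; exact ⟨g, hg, rfl⟩
  rw [minkowskiSum_eq, himg, convexHull_sum]
  exact Finset.sum_congr rfl fun j _ => hA j

lemma hull_filter {s : Set (Fin n → ℝ)} (φ : (Fin n → ℝ) →ₗ[ℝ] ℝ) {b : ℝ}
    (hs : ∀ p ∈ s, b ≤ φ p) {x : Fin n → ℝ} (hx : x ∈ convexHull ℝ s) (hxb : φ x = b) :
    x ∈ convexHull ℝ {p ∈ s | φ p = b} := by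
  classical
  rw [convexHull_eq] at hx
  obtain ⟨ι, t, w, z, hw0, hw1, hz, rfl⟩ := hx
  have h1 : φ (t.centerMass w z) = ∑ i ∈ t, w i * φ (z i) := by
    rw [Finset.centerMass, map_smul, map_sum, hw1]
    simp [smul_eq_mul]
  have hsum : ∑ i ∈ t, w i * b = ∑ i ∈ t, w i * φ (z i) := by
    rw [← h1, hxb, ← Finset.sum_mul, hw1, one_mul]
  have heq : ∀ i ∈ t, w i * b = w i * φ (z i) :=
    (Finset.sum_eq_sum_iff_of_le
      (fun i hi => mul_le_mul_of_nonneg_left (hs _ (hz i hi)) (hw0 i hi))).mp hsum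
  rw [← Finset.centerMass_filter_ne_zero (w := w)]
  apply Finset.centerMass_mem_convexHull
  · exact fun i hi => hw0 i (Finset.mem_filter.mp hi).1
  · rw [Finset.sum_filter_ne_zero, hw1]; exact one_pos
  · intro i hi
    obtain ⟨hit, hwi⟩ := Finset.mem_filter.mp hi
    exact ⟨hz i hit, (mul_left_cancel₀ hwi (heq i hit)).symm⟩



lemma key {n c : ℕ} (hc : 0 < c) (Δ Nb : Fin c → Set (Fin n → ℝ))
    (hΔ0 : ∀ i, (0 : Fin n → ℝ) ∈ Δ i)
    (hpair : ∀ i j, ∀ x ∈ Δ i, ∀ y ∈ Nb j,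
      -(if i = j then (1 : ℝ) else 0) ≤ ∑ k, x k * y k)
    (T : Finset (Fin n → ℝ)) (hT : minkowskiSum Nb = convexHull ℝ (T : Set (Fin n → ℝ)))
    (hNbint : (0 : Fin n → ℝ) ∈ interior (minkowskiSum Nb))
    (hcNb : polarDual (minkowskiSum Nb) = convexHull ℝ (⋃ i, Δ i))
    (F : Set (Fin n → ℝ)) (hF : IsFaceOf (minkowskiSum Nb) F) (hFne : F.Nonempty)
    (hFprop : F ≠ minkowskiSum Nb)
    (hFA : ∀ i, ∃ x ∈ dualFace (minkowskiSum Nb) F ∩ Δ i, x ≠ 0) :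
    (IsFaceOf (minkowskiSum Δ) (minkowskiSum fun i => dualFace (minkowskiSum Nb) F ∩ Δ i) ∧
      (minkowskiSum fun i => dualFace (minkowskiSum Nb) F ∩ Δ i).Nonempty ∧
      minkowskiSum (fun i => dualFace (minkowskiSum Nb) F ∩ Δ i) ≠ minkowskiSum Δ ∧
      ∀ j, ∃ y ∈ dualFace (minkowskiSum Δ)
          (minkowskiSum fun i => dualFace (minkowskiSum Nb) F ∩ Δ i) ∩ Nb j, y ≠ 0) ∧
    minkowskiSum (fun j => dualFace (minkowskiSum Δ)
      (minkowskiSum fun i => dualFace (minkowskiSum Nb) F ∩ Δ i) ∩ Nb j) = F := by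
  classical
  set N := minkowskiSum Nb with hN
  set D := minkowskiSum Δ with hD
  set Fd := dualFace N F with hFddef
  set G := minkowskiSum (fun i => Fd ∩ Δ i) with hGdef
  -- Δ i ⊆ polarDual N
  have hΔsubP : ∀ i, ∀ x ∈ Δ i, x ∈ polarDual N := by
    intro i x hx y hy
    obtain ⟨z, hz, rfl⟩ := hy
    calc (-1 : ℝ) = ∑ j, -(if i = j then (1:ℝ) else 0) := (delta_sum_right i).symm
      _ ≤ ∑ j, ∑ k, x k * z j k :=
        Finset.sum_le_sum fun j _ => hpair i j x hx (z j) (hz j)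
      _ = ∑ k, x k * (∑ j, z j) k := (dot_sum_right x z).symm
  -- the exposing functional
  obtain ⟨ℓ, hFeq⟩ : ∃ ℓ : (Fin n → ℝ) →ₗ[ℝ] ℝ, F = {x ∈ N | ∀ y ∈ N, ℓ x ≤ ℓ y} := by
    rcases hF with h | h
    · exact absurd h hFprop
    · exact h
  obtain ⟨f₀, hf₀⟩ := hFne
  have hf₀' : f₀ ∈ N ∧ ∀ y ∈ N, ℓ f₀ ≤ ℓ y := by rw [hFeq] at hf₀; exact hf₀
  set m := ℓ f₀ with hm
  have hFchar : F = {y ∈ N | ℓ y = m} := by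
    rw [hFeq]; ext y
    constructor
    · rintro ⟨hyN, hymin⟩; exact ⟨hyN, le_antisymm (hymin f₀ hf₀'.1) (hf₀'.2 y hyN)⟩
    · rintro ⟨hyN, hym⟩; exact ⟨hyN, fun y' hy' => hym ▸ hf₀'.2 y' hy'⟩
  have hFsubN : F ⊆ N := by rw [hFchar]; exact fun y hy => hy.1
  -- m < 0
  have hmneg : m < 0 := by
    by_contra hcon
    push_neg at hcon
    obtain ⟨y₁, hy₁N, hy₁F⟩ : ∃ y₁ ∈ N, y₁ ∉ F := by
      by_contra h'
      push_neg at h'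
      exact hFprop (Set.Subset.antisymm hFsubN h')
    have hy₁pos : 0 < ℓ y₁ := by
      rcases lt_or_eq_of_le (hf₀'.2 y₁ hy₁N) with h | h
      · linarith
      · exact absurd (hFchar ▸ ⟨hy₁N, h.symm⟩) hy₁F
    obtain ⟨ε, hε, hball⟩ := Metric.mem_nhds_iff.mp (mem_interior_iff_mem_nhds.mp hNbint)
    set r := ε / (2 * (‖y₁‖ + 1)) with hr
    have hden : (0:ℝ) < ‖y₁‖ + 1 := by positivity
    have hrpos : 0 < r := by positivity
    have hrn : r * ‖y₁‖ < ε := by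
      rw [hr, div_mul_eq_mul_div, div_lt_iff₀ (by positivity)]
      nlinarith [norm_nonneg y₁]
    have htmem : (-r) • y₁ ∈ N := by
      apply hball
      rw [mem_ball_zero_iff, norm_smul, norm_neg]
      simpa [abs_of_pos hrpos] using hrn
    have := hf₀'.2 _ htmem
    rw [map_smul, smul_eq_mul] at this
    nlinarith
  have hmne : (-m) ≠ 0 := by linarith
  have hminv : (0:ℝ) < (-m)⁻¹ := by
    apply inv_pos.mpr; linarith
  -- TF and the barycenter y₀
  have hTN : ∀ p ∈ T, p ∈ N := fun p hp => hT ▸ subset_convexHull ℝ _ hp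
  set TF := T.filter (fun p => ℓ p = m) with hTFdef
  have hTFsubF : ∀ p ∈ TF, p ∈ F := by
    intro p hp
    obtain ⟨hpT, hpm⟩ := Finset.mem_filter.mp hp
    rw [hFchar]; exact ⟨hTN p hpT, hpm⟩
  have hNconv : Convex ℝ N := hT ▸ convex_convexHull ℝ _
  have hFconv : Convex ℝ F := by
    have : F = N ∩ {y | ℓ y = m} := by rw [hFchar]; rfl
    rw [this]
    exact hNconv.inter (convex_hyperplane ℓ.isLinear m)
  have hFsubTF : F ⊆ convexHull ℝ (TF : Set (Fin n → ℝ)) := by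
    intro y hy
    have hyN : y ∈ N := hFsubN hy
    have hym : ℓ y = m := by rw [hFchar] at hy; exact hy.2
    have h1 : y ∈ convexHull ℝ {p ∈ (T : Set (Fin n → ℝ)) | ℓ p = m} :=
      hull_filter ℓ (fun p hp => hf₀'.2 p (hTN p hp)) (hT ▸ hyN) hym
    have h2 : {p ∈ (T : Set (Fin n → ℝ)) | ℓ p = m} = (TF : Set (Fin n → ℝ)) := by
      ext p; simp [hTFdef]
    rwa [h2] at h1
  have hTFne : TF.Nonempty := by
    rcases Finset.eq_empty_or_nonempty TF with h | h
    · exfalso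
      have := hFsubTF hf₀
      rw [h] at this
      simp at this
    · exact h
  set y₀ := TF.centerMass (fun _ => (1:ℝ)) id with hy₀def
  have hwsum : (0:ℝ) < ∑ _p ∈ TF, (1:ℝ) := by
    rw [Finset.sum_const, nsmul_eq_mul, mul_one]
    exact_mod_cast hTFne.card_pos
  have hy₀F : y₀ ∈ F := by
    have h1 : y₀ ∈ convexHull ℝ (TF : Set (Fin n → ℝ)) :=
      TF.centerMass_mem_convexHull (fun _ _ => zero_le_one) hwsum
        (fun p hp => Finset.mem_coe.mpr hp)
    exact convexHull_min (fun p hp => hTFsubF p hp) hFconv h1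
  have hy₀N : y₀ ∈ N := hFsubN hy₀F
  -- dot with y₀ is an average
  have hy₀avg : ∀ x' : Fin n → ℝ,
      (∑ k, x' k * y₀ k) = (∑ _p ∈ TF, (1:ℝ))⁻¹ * ∑ p ∈ TF, ∑ k, x' k * p k := by
    intro x'
    have : (∑ k, x' k * y₀ k) = dotR x' y₀ := rfl
    rw [this, hy₀def, Finset.centerMass, map_smul, map_sum, smul_eq_mul]
    congr 1
    exact Finset.sum_congr rfl fun p _ => by rw [one_smul]; rfl
  -- the key interiority property of y₀
  have hP : ∀ x', x' ∈ polarDual N → (∑ k, x' k * y₀ k) = -1 → x' ∈ Fd := by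
    intro x' hx' hdot
    refine ⟨hx', ?_⟩
    have hall : ∀ p ∈ TF, (∑ k, x' k * p k) = -1 := by
      have h1 : ∀ p ∈ TF, (-1:ℝ) ≤ ∑ k, x' k * p k := fun p hp =>
        hx' p (hTN p (Finset.mem_filter.mp hp).1)
      have h2 : ∑ p ∈ TF, (-1:ℝ) = ∑ p ∈ TF, (∑ k, x' k * p k) := by
        have h3 := hy₀avg x'
        rw [hdot] at h3
        have h4 : ∑ p ∈ TF, (∑ k, x' k * p k) = -(∑ _p ∈ TF, (1:ℝ)) := by
          have h5 := congrArg (fun t => (∑ _p ∈ TF, (1:ℝ)) * t) h3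
          rw [← mul_assoc, mul_inv_cancel₀ (ne_of_gt hwsum), one_mul] at h5
          linarith
        rw [h4]
        simp
      intro p hp
      exact ((Finset.sum_eq_sum_iff_of_le h1).mp h2 p hp).symm
    intro y hy
    have hsub : (TF : Set (Fin n → ℝ)) ⊆ {w | dotR x' w = -1} := fun p hp => hall p hp
    have hhyp : Convex ℝ {w | dotR x' w = -1} := convex_hyperplane (dotR x').isLinear (-1)
    exact convexHull_min hsub hhyp (hFsubTF hy)
  -- values on G and D
  have hGD : G ⊆ D := by
    rintro x ⟨z, hz, rfl⟩
    exact ⟨z, fun i => (hz i).2, rfl⟩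
  have hGval : ∀ x ∈ G, ∀ y ∈ F, (∑ k, x k * y k) = -(c:ℝ) := by
    rintro x ⟨z, hz, rfl⟩ y hy
    rw [dot_sum_left]
    rw [Finset.sum_congr rfl fun i _ => (hz i).1.2 y hy]
    simp
  have hDval : ∀ x ∈ D, ∀ y ∈ F, -(c:ℝ) ≤ ∑ k, x k * y k := by
    rintro x ⟨z, hz, rfl⟩ y hy
    rw [dot_sum_left]
    calc -(c:ℝ) = ∑ _i : Fin c, (-1 : ℝ) := by simp
      _ ≤ ∑ i, ∑ k, z i k * y k :=
        Finset.sum_le_sum fun i _ => hΔsubP i (z i) (hz i) y (hFsubN hy)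
  obtain ⟨ξ, hξmem, hξne⟩ : ∃ ξ : Fin c → Fin n → ℝ, (∀ i, ξ i ∈ Fd ∩ Δ i) ∧ ∀ i, ξ i ≠ 0 := by
    choose ξ h1 h2 using hFA
    exact ⟨ξ, h1, h2⟩
  have hGne : G.Nonempty := ⟨∑ i, ξ i, ξ, hξmem, rfl⟩
  obtain ⟨xbar, hxbarG⟩ := hGne
  have hxbarval : (∑ k, xbar k * y₀ k) = -(c:ℝ) := hGval xbar hxbarG y₀ hy₀F
  -- reverse inclusion for the face property
  have hrev : ∀ x ∈ D, (∑ k, x k * y₀ k) = -(c:ℝ) → x ∈ G := by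
    rintro x ⟨z, hz, rfl⟩ hval
    have hle : ∀ i, (-1:ℝ) ≤ ∑ k, z i k * y₀ k := fun i =>
      hΔsubP i (z i) (hz i) y₀ hy₀N
    have hsum : ∑ i, (∑ k, z i k * y₀ k) = ∑ _i : Fin c, (-1:ℝ) := by
      rw [← dot_sum_left, hval]; simp
    have heach : ∀ i, (∑ k, z i k * y₀ k) = -1 :=
      squeeze_sum hle hsum
    exact ⟨z, fun i => ⟨hP (z i) (hΔsubP i (z i) (hz i)) (heach i), hz i⟩, rfl⟩
  -- G is a face
  have hGface : IsFaceOf D G := by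
    right
    refine ⟨dotL y₀, ?_⟩
    ext x
    constructor
    · intro hx
      refine ⟨hGD hx, fun y hy => ?_⟩
      have h1 : dotL y₀ x = -(c:ℝ) := hGval x hx y₀ hy₀F
      have h2 : -(c:ℝ) ≤ dotL y₀ y := hDval y hy y₀ hy₀F
      rw [h1]; exact h2
    · rintro ⟨hxD, hxmin⟩
      apply hrev x hxD
      have h1 : dotL y₀ x ≤ dotL y₀ xbar := hxmin xbar (hGD hxbarG)
      have h2 : dotL y₀ xbar = -(c:ℝ) := hxbarval
      have h3 : -(c:ℝ) ≤ dotL y₀ x := hDval x hxD y₀ hy₀F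
      have : dotL y₀ x = -(c:ℝ) := le_antisymm (h2 ▸ h1) h3
      exact this
  -- G is proper
  have h0D : (0 : Fin n → ℝ) ∈ D := ⟨fun _ => 0, fun i => hΔ0 i, by simp⟩
  have hGprop : G ≠ D := by
    intro h
    have h0G : (0 : Fin n → ℝ) ∈ G := h ▸ h0D
    have := hGval 0 h0G y₀ hy₀F
    simp at this
    have hcpos : (0:ℝ) < (c:ℝ) := by exact_mod_cast hc
    linarith
  -- decompositions of points of F land in dualFace D G
  have hkey2 : ∀ y ∈ F, ∀ zy : Fin c → Fin n → ℝ, (∀ j, zy j ∈ Nb j) → y = ∑ j, zy j →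
      ∀ j, zy j ∈ dualFace D G ∩ Nb j := by
    intro y hyF zy hzy hydec j
    have heach : ∀ i, ∀ x' ∈ Fd ∩ Δ i,
        (∑ k, x' k * zy j k) = -(if i = j then (1:ℝ) else 0) := by
      intro i x' hx'
      have hsum : ∑ j', (∑ k, x' k * zy j' k) = ∑ j', -(if i = j' then (1:ℝ) else 0) := by
        rw [← dot_sum_right, ← hydec, hx'.1.2 y hyF, delta_sum_right]
      have hle : ∀ j', -(if i = j' then (1:ℝ) else 0) ≤ ∑ k, x' k * zy j' k := fun j' =>
        hpair i j' x' hx'.2 (zy j') (hzy j')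
      exact squeeze_sum hle hsum j
    refine ⟨⟨?_, ?_⟩, hzy j⟩
    · -- zy j ∈ polarDual D
      intro w hw
      obtain ⟨zw, hzw, rfl⟩ := hw
      rw [dot_sum_right]
      calc (-1:ℝ) = ∑ i, -(if i = j then (1:ℝ) else 0) := (delta_sum_left j).symm
        _ ≤ ∑ i, ∑ k, zy j k * zw i k := by
          apply Finset.sum_le_sum
          intro i _
          rw [← dot_comm (zw i) (zy j)]
          exact hpair i j (zw i) (hzw i) (zy j) (hzy j)
    · -- pairing -1 with points of G
      rintro x ⟨zx, hzx, rfl⟩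
      rw [dot_sum_right]
      rw [Finset.sum_congr rfl fun i _ =>
        (dot_comm (zy j) (zx i)).trans (heach i (zx i) (hzx i))]
      exact delta_sum_left j
  -- the fourth condition and F ⊆ Ψ G
  obtain ⟨zy₀, hzy₀, hy₀dec⟩ := id hy₀N
  have hcond4 : ∀ j, ∃ y ∈ dualFace D G ∩ Nb j, y ≠ 0 := by
    intro j
    refine ⟨zy₀ j, hkey2 y₀ hy₀F zy₀ hzy₀ hy₀dec j, ?_⟩
    intro h0
    have := (hkey2 y₀ hy₀F zy₀ hzy₀ hy₀dec j).1.2 xbar hxbarG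
    rw [h0] at this
    simp at this
  have hFsubΨ : F ⊆ minkowskiSum (fun j => dualFace D G ∩ Nb j) := by
    intro y hy
    obtain ⟨zy, hzy, hydec⟩ := hFsubN hy
    exact ⟨zy, fun j => hkey2 y hy zy hzy hydec j, hydec⟩
  -- the normalized exposing functional u'
  set u : Fin n → ℝ := fun k => ℓ (fun j => if k = j then (1:ℝ) else 0) with hu
  have hℓeq : ∀ x : Fin n → ℝ, ℓ x = ∑ k, x k * u k := by
    intro x
    conv_lhs => rw [pi_eq_sum_univ x]
    rw [map_sum]
    exact Finset.sum_congr rfl fun k _ => by rw [map_smul, smul_eq_mul]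
  set u' := (-m)⁻¹ • u with hu'
  have hu'dot : ∀ x : Fin n → ℝ, (∑ k, u' k * x k) = (-m)⁻¹ * ℓ x := by
    intro x
    rw [hℓeq, Finset.mul_sum]
    exact Finset.sum_congr rfl fun k _ => by
      rw [hu']; simp only [Pi.smul_apply, smul_eq_mul]; ring
  have hu'P : u' ∈ polarDual N := by
    intro y hy
    rw [hu'dot]
    have h1 : m ≤ ℓ y := hf₀'.2 y hy
    have h2 : (-m)⁻¹ * m ≤ (-m)⁻¹ * ℓ y := mul_le_mul_of_nonneg_left h1 (le_of_lt hminv)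
    have h3 : (-m)⁻¹ * m = -1 := by field_simp; rw [div_self hmneg.ne]
    linarith
  have hu'Fd : u' ∈ Fd := by
    refine ⟨hu'P, fun y hy => ?_⟩
    rw [hu'dot]
    have : ℓ y = m := by rw [hFchar] at hy; exact hy.2
    rw [this]; field_simp; rw [div_self hmneg.ne]
  -- Ψ G ⊆ F
  have hΨsubF : minkowskiSum (fun j => dualFace D G ∩ Nb j) ⊆ F := by
    rintro y ⟨zy, hzy, rfl⟩
    have hyN : (∑ j, zy j) ∈ N := ⟨zy, fun j => (hzy j).2, rfl⟩
    -- every point of ∪ (Fd ∩ Δ i) pairs to -1 with ∑ zy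
    have hFddot : ∀ i, ∀ x' ∈ Fd ∩ Δ i, (∑ k, x' k * (∑ j, zy j) k) = -1 := by
      intro i x' hx'
      set zz := Function.update ξ i x' with hzz
      have hzzmem : ∀ i', zz i' ∈ Fd ∩ Δ i' := by
        intro i'
        rcases eq_or_ne i' i with h | h
        · subst h; rw [hzz, Function.update_self]; exact hx'
        · rw [hzz, Function.update_of_ne h]; exact hξmem i'
      have hxG : (∑ i', zz i') ∈ G := ⟨zz, hzzmem, rfl⟩
      have hj : ∀ j, (∑ k, zz i k * zy j k) = -(if i = j then (1:ℝ) else 0) := by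
        intro j
        have hsum : ∀ j', ∑ i', (∑ k, zz i' k * zy j' k) = ∑ i', -(if i' = j' then (1:ℝ) else 0) := by
          intro j'
          rw [← dot_sum_left, dot_comm, (hzy j').1.2 _ hxG, delta_sum_left]
        have hle : ∀ i', -(if i' = j then (1:ℝ) else 0) ≤ ∑ k, zz i' k * zy j k := fun i' =>
          hpair i' j (zz i') (hzzmem i').2 (zy j) (hzy j).2
        have := (Finset.sum_eq_sum_iff_of_le (fun i' _ => hle i')).mp (hsum j).symm i
          (Finset.mem_univ i)
        exact this.symm
      have hzzi : zz i = x' := by rw [hzz, Function.update_self]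
      have hj' : ∀ j, (∑ k, x' k * zy j k) = -(if i = j then (1:ℝ) else 0) := by
        intro j; rw [← hzzi]; exact hj j
      rw [dot_sum_right]
      rw [Finset.sum_congr rfl fun j _ => hj' j]
      exact delta_sum_right i
    -- u' lies in the hull of ∪ (Fd ∩ Δ i)
    have hu'conv : u' ∈ convexHull ℝ (⋃ i, (Fd ∩ Δ i : Set (Fin n → ℝ))) := by
      have h1 : u' ∈ convexHull ℝ (⋃ i, Δ i) := hcNb ▸ hu'P
      have h2 : ∀ p ∈ (⋃ i, Δ i : Set (Fin n → ℝ)), (-1:ℝ) ≤ dotL y₀ p := by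
        intro p hp
        obtain ⟨_, ⟨i, rfl⟩, hpi⟩ := hp
        exact hΔsubP i p hpi y₀ hy₀N
      have h3 : dotL y₀ u' = -1 := hu'Fd.2 y₀ hy₀F
      have h4 := hull_filter (dotL y₀) h2 h1 h3
      refine convexHull_mono ?_ h4
      rintro p ⟨hp1, hp2⟩
      obtain ⟨_, ⟨i, rfl⟩, hpi⟩ := hp1
      exact Set.mem_iUnion.mpr ⟨i, hP p (hΔsubP i p hpi) hp2, hpi⟩
    have hdotu' : (∑ k, u' k * (∑ j, zy j) k) = -1 := by
      have hsub : (⋃ i, (Fd ∩ Δ i : Set (Fin n → ℝ))) ⊆ {x | dotL (∑ j, zy j) x = -1} := by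
        rintro p hp
        obtain ⟨_, ⟨i, rfl⟩, hpi⟩ := hp
        exact hFddot i p hpi
      have hhyp : Convex ℝ {x | dotL (∑ j, zy j) x = -1} :=
        convex_hyperplane (dotL (∑ j, zy j)).isLinear (-1)
      exact convexHull_min hsub hhyp hu'conv
    have hval : ℓ (∑ j, zy j) = m := by
      rw [hu'dot] at hdotu'
      have h5 : ℓ (∑ j, zy j) = (-m) * (-1) := by
        rw [← hdotu', ← mul_assoc, mul_inv_cancel₀ hmne, one_mul]
      rw [h5]; ring
    rw [hFchar]
    exact ⟨hyN, hval⟩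
  exact ⟨⟨hGface, ⟨xbar, hxbarG⟩, hGprop, hcond4⟩, Set.Subset.antisymm hΨsubF hFsubΨ⟩



lemma face_subset {n : ℕ} {S F : Set (Fin n → ℝ)} (h : IsFaceOf S F) : F ⊆ S := by
  rcases h with h | ⟨ℓ, h⟩
  · exact h.le
  · rw [h]; exact fun x hx => hx.1

lemma face_n0 {S F : Set (Fin 0 → ℝ)} (hS : S.Nonempty) (hface : IsFaceOf S F)
    (hne : F.Nonempty) : F = S := by
  obtain ⟨f, hf⟩ := hne
  obtain ⟨s, hs⟩ := hS
  ext z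
  constructor
  · exact fun hz => face_subset hface hz
  · intro hz
    have : z = f := Subsingleton.elim _ _
    rw [this]; exact hf


end MirrorAux

/-- The mirror map for the canonical degeneration of a nef complete
intersection: for dual nef partition data `Δ₁,…,Δ_c` and `∇₁,…,∇_c` with
reflexive Minkowski sums `Δ` and `∇`, the assignment
`F ↦ (F^∨ ∩ Δ₁) + ⋯ + (F^∨ ∩ Δ_c)` is an inclusion-reversing bijection from
the nonempty proper faces `F` of `∇` with `F^∨ ∩ Δ_i ≠ {0}` for all `i` onto
the nonempty proper faces `G` of `Δ` with `G^∨ ∩ ∇_j ≠ {0}` for all `j`. -/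
theorem mirror_map_inclusion_reversing_bijection {n c : ℕ}
    (Δ Nb : Fin c → Set (Fin n → ℝ))
    (hΔlat : ∀ i, IsLatticePolytope (Δ i))
    (hNblat : ∀ j, IsLatticePolytope (Nb j))
    (hΔ0 : ∀ i, (0 : Fin n → ℝ) ∈ Δ i) (hNb0 : ∀ j, (0 : Fin n → ℝ) ∈ Nb j)
    -- (a) the pairing inequalities ⟨x, y⟩ ≥ -δ_{ij}
    (hpair : ∀ i j, ∀ x ∈ Δ i, ∀ y ∈ Nb j,
      -(if i = j then (1 : ℝ) else 0) ≤ ∑ k, x k * y k)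
    (ΔS : Set (Fin n → ℝ)) (hΔS : ΔS = minkowskiSum Δ)
    (NbS : Set (Fin n → ℝ)) (hNbS : NbS = minkowskiSum Nb)
    -- (b) the Minkowski sums Δ and ∇ are reflexive
    (hΔint : (0 : Fin n → ℝ) ∈ interior ΔS)
    (hNbint : (0 : Fin n → ℝ) ∈ interior NbS)
    (hΔduallat : IsLatticePolytope (polarDual ΔS))
    (hNbduallat : IsLatticePolytope (polarDual NbS))
    -- (c) Δ* = conv(∇₁ ∪ … ∪ ∇_c) and ∇* = conv(Δ₁ ∪ … ∪ Δ_c)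
    (hcΔ : polarDual ΔS = convexHull ℝ (⋃ j, Nb j))
    (hcNb : polarDual NbS = convexHull ℝ (⋃ i, Δ i))
    -- the set of nonempty proper faces F of ∇ with F^∨ ∩ Δ_i ≠ {0} for all i
    (A : Set (Set (Fin n → ℝ)))
    (hA : A = {F | IsFaceOf NbS F ∧ F.Nonempty ∧ F ≠ NbS ∧
      ∀ i, ∃ x ∈ dualFace NbS F ∩ Δ i, x ≠ 0})
    -- the set of nonempty proper faces G of Δ with G^∨ ∩ ∇_j ≠ {0} for all j
    (B : Set (Set (Fin n → ℝ)))
    (hB : B = {G | IsFaceOf ΔS G ∧ G.Nonempty ∧ G ≠ ΔS ∧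
      ∀ j, ∃ y ∈ dualFace ΔS G ∩ Nb j, y ≠ 0})
    -- the map F ↦ (F^∨ ∩ Δ₁) + ⋯ + (F^∨ ∩ Δ_c)
    (Φ : Set (Fin n → ℝ) → Set (Fin n → ℝ))
    (hΦ : Φ = fun F => minkowskiSum (fun i => dualFace NbS F ∩ Δ i)) :
    Set.BijOn Φ A B ∧ ∀ F ∈ A, ∀ F' ∈ A, (F ⊆ F' ↔ Φ F' ⊆ Φ F) := by
  classical
  subst hΔS hNbS hΦ
  rcases Nat.eq_zero_or_pos n with hn | hn
  · -- trivial case n = 0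
    subst hn
    have hAe : A = ∅ := by
      rw [hA]
      ext F
      simp only [Set.mem_setOf_eq, Set.mem_empty_iff_false, iff_false, not_and]
      intro h1 h2 h3
      exact fun _ => h3 (MirrorAux.face_n0 ⟨0, interior_subset hNbint⟩ h1 h2)
    have hBe : B = ∅ := by
      rw [hB]
      ext G
      simp only [Set.mem_setOf_eq, Set.mem_empty_iff_false, iff_false, not_and]
      intro h1 h2 h3
      exact fun _ => h3 (MirrorAux.face_n0 ⟨0, interior_subset hΔint⟩ h1 h2)
    rw [hAe, hBe]
    exact ⟨Set.bijOn_empty _, fun F hF => absurd hF (Set.notMem_empty F)⟩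
  · -- main case
    have hc : 0 < c := by
      rcases Nat.eq_zero_or_pos c with hc0 | hc
      · exfalso
        subst hc0
        have hsing : minkowskiSum Nb = {(0 : Fin n → ℝ)} := by
          ext x
          simp only [minkowskiSum, Set.mem_setOf_eq, Set.mem_singleton_iff]
          constructor
          · rintro ⟨z, _, rfl⟩; simp
          · intro h; exact ⟨fun i => 0, fun i => i.elim0, by simp [h]⟩
        rw [hsing] at hNbint
        obtain ⟨ε, hε, hball⟩ := Metric.mem_nhds_iff.mp (mem_interior_iff_mem_nhds.mp hNbint)
        have hne : Nonempty (Fin n) := ⟨⟨0, hn⟩⟩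
        have hp : (fun _ : Fin n => ε / 2) ∈ Metric.ball (0 : Fin n → ℝ) ε := by
          rw [mem_ball_zero_iff]
          have h6 : ‖(fun _ : Fin n => ε / 2)‖ ≤ ‖ε / 2‖ := pi_norm_const_le _
          rw [Real.norm_eq_abs, abs_of_pos (by linarith)] at h6
          linarith
        have := hball hp
        rw [Set.mem_singleton_iff] at this
        have h0 := congrFun this ⟨0, hn⟩
        simp only [Pi.zero_apply] at h0
        linarith
      · exact hc
    -- finite generating sets
    have hTex : ∀ CC : Fin c → Set (Fin n → ℝ), (∀ j, IsLatticePolytope (CC j)) →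
        ∃ T : Finset (Fin n → ℝ), minkowskiSum CC = convexHull ℝ (T : Set (Fin n → ℝ)) := by
      intro CC hCC
      choose s hs using hCC
      apply MirrorAux.minkowskiSum_hull CC
        (fun j => (s j).image (fun z : Fin n → ℤ => fun i => (z i : ℝ)))
      intro j
      rw [hs j, Finset.coe_image]
    obtain ⟨TN, hTN⟩ := hTex Nb hNblat
    obtain ⟨TD, hTD⟩ := hTex Δ hΔlat
    -- swapped pairing
    have hpair' : ∀ j i, ∀ y ∈ Nb j, ∀ x ∈ Δ i,
        -(if j = i then (1 : ℝ) else 0) ≤ ∑ k, y k * x k := by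
      intro j i y hy x hx
      have h1 := hpair i j x hx y hy
      rw [MirrorAux.dot_comm x y] at h1
      have h2 : (if j = i then (1:ℝ) else 0) = (if i = j then (1:ℝ) else 0) := by
        by_cases h : i = j <;> simp [h, Ne.symm, eq_comm]
      rw [h2]
      exact h1
    -- forward direction of the key lemma
    have keyF : ∀ F ∈ A,
        ((fun F => minkowskiSum fun i => dualFace (minkowskiSum Nb) F ∩ Δ i) F ∈ B) ∧
        minkowskiSum (fun j => dualFace (minkowskiSum Δ)
          (minkowskiSum fun i => dualFace (minkowskiSum Nb) F ∩ Δ i) ∩ Nb j) = F := by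
      intro F hF
      rw [hA] at hF
      obtain ⟨h1, h2, h3, h4⟩ := hF
      have hk := MirrorAux.key hc Δ Nb hΔ0 hpair TN hTN hNbint hcNb F h1 h2 h3 h4
      exact ⟨by rw [hB]; exact hk.1, hk.2⟩
    -- backward direction
    have keyG : ∀ G ∈ B,
        (minkowskiSum (fun j => dualFace (minkowskiSum Δ) G ∩ Nb j) ∈ A) ∧
        minkowskiSum (fun i => dualFace (minkowskiSum Nb)
          (minkowskiSum fun j => dualFace (minkowskiSum Δ) G ∩ Nb j) ∩ Δ i) = G := by
      intro G hG
      rw [hB] at hG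
      obtain ⟨h1, h2, h3, h4⟩ := hG
      have hk := MirrorAux.key hc Nb Δ hNb0 hpair' TD hTD hΔint hcΔ G h1 h2 h3 h4
      exact ⟨by rw [hA]; exact hk.1, hk.2⟩
    -- antitonicity of the dual-face Minkowski construction
    have hanti : ∀ (Q : Set (Fin n → ℝ)) (CC : Fin c → Set (Fin n → ℝ))
        (F F' : Set (Fin n → ℝ)), F ⊆ F' →
        minkowskiSum (fun i => dualFace Q F' ∩ CC i) ⊆
        minkowskiSum (fun i => dualFace Q F ∩ CC i) := by
      rintro Q CC F F' hsub x ⟨z, hz, rfl⟩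
      exact ⟨z, fun i => ⟨⟨(hz i).1.1, fun y hy => (hz i).1.2 y (hsub hy)⟩, (hz i).2⟩, rfl⟩
    refine ⟨⟨?_, ?_, ?_⟩, ?_⟩
    · -- MapsTo
      intro F hF
      exact (keyF F hF).1
    · -- InjOn
      intro F hF F' hF' heq
      have h1 := (keyF F hF).2
      have h2 := (keyF F' hF').2
      simp only at heq
      rw [← h1, ← h2, heq]
    · -- SurjOn
      intro G hG
      exact ⟨minkowskiSum (fun j => dualFace (minkowskiSum Δ) G ∩ Nb j),
        (keyG G hG).1, (keyG G hG).2⟩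
    · -- inclusion reversing
      intro F hF F' hF'
      constructor
      · intro hsub
        exact hanti (minkowskiSum Nb) Δ F F' hsub
      · intro hsub
        have h1 := hanti (minkowskiSum Δ) Nb _ _ hsub
        rw [(keyF F hF).2] at h1
        rw [(keyF F' hF').2] at h1
        exact h1
end
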